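/- arXiv:2101.08756 — 4 statements merged into one kernel-verified Lean document; each statement's English description precedes it below -/
import Mathlib

section
/- For every ω-regular language L ⊆ Σ^ω, exactly one of the following holds: (1) L is DBW-recognizable; (2) there exists a DBW-refuter for L. -/
structure DetAuto (α : Type) where
  Q : Type
  [fin : Fintype Q]
  init : Q
  δ : Q → α → Q

attribute [instance] DetAuto.fin

/-- The run of a deterministic automaton on an infinite word. -/
def DetAuto.run {α : Type} (M : DetAuto α) (x : ℕ → α) : ℕ → M.Q
  | 0 => M.init
  | n + 1 => M.δ (M.run x n) (x n)

/-- Parity acceptance: the maximal color occurring infinitely often in the run is odd. -/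
def ParityAccept {α : Type} (M : DetAuto α) (c : M.Q → ℕ) (x : ℕ → α) : Prop :=
  ∃ m, Odd m ∧ (∃ᶠ n in Filter.atTop, c (M.run x n) = m) ∧
    ∀ m', (∃ᶠ n in Filter.atTop, c (M.run x n) = m') → m' ≤ m

/-- A language is ω-regular iff it is recognized by some deterministic parity automaton. -/
def OmegaRegular {α : Type} (L : Set (ℕ → α)) : Prop :=
  ∃ (M : DetAuto α) (c : M.Q → ℕ), ∀ x, x ∈ L ↔ ParityAccept M c x

/-- A language is DBW-recognizable iff some deterministic Büchi automaton recognizes it. -/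
def DBWRecognizable {α : Type} (L : Set (ℕ → α)) : Prop :=
  ∃ (M : DetAuto α) (acc : Set M.Q), ∀ x, x ∈ L ↔ ∃ᶠ n in Filter.atTop, M.run x n ∈ acc

/-- An (A/α)-transducer: reads letters of `A`, outputs letters of `α`. -/
structure Transducer (A α : Type) where
  S : Type
  [fin : Fintype S]
  init : S
  ρ : S → A → S
  τ : S → α

attribute [instance] Transducer.fin

def Transducer.run {A α : Type} (T : Transducer A α) (y : ℕ → A) : ℕ → T.S
  | 0 => T.init
  | n + 1 => T.ρ (T.run y n) (y n)

/-- Output with environment initiation: output letter `j` is emitted at state `s_{j+1}`. -/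
def Transducer.out {A α : Type} (T : Transducer A α) (y : ℕ → A) : ℕ → α :=
  fun j => T.τ (T.run y (j + 1))

/-- A DBW-refuter for `L`: a ({acc,rej}/Σ)-transducer (with `true` = acc, `false` = rej)
such that for every input `y`, the output is in `L` iff `y` has only finitely many acc's. -/
def DBWRefuter {α : Type} (L : Set (ℕ → α)) (R : Transducer Bool α) : Prop :=
  ∀ y : ℕ → Bool, R.out y ∈ L ↔ {j | y j = true}.Finite

open Filter

namespace Aux


variable {α : Type}

def runFrom (M : DetAuto α) (q : M.Q) (x : ℕ → α) : ℕ → M.Q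
  | 0 => q
  | n + 1 => M.δ (runFrom M q x n) (x n)

theorem run_eq_runFrom (M : DetAuto α) (x : ℕ → α) (n : ℕ) :
    M.run x n = runFrom M M.init x n := by
  induction n with
  | zero => rfl
  | succ n ih => simp [DetAuto.run, runFrom, ih]

theorem runFrom_add (M : DetAuto α) (q : M.Q) (x : ℕ → α) (n j : ℕ) :
    runFrom M q x (n + j) = runFrom M (runFrom M q x n) (fun i => x (n + i)) j := by
  induction j with
  | zero => rfl
  | succ j ih => simp [runFrom, ih]

theorem run_shift (M : DetAuto α) (x : ℕ → α) (n j : ℕ) :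
    M.run x (n + j) = runFrom M (M.run x n) (fun i => x (n + i)) j := by
  rw [run_eq_runFrom, run_eq_runFrom, runFrom_add]

def maxC (M : DetAuto α) (c : M.Q → ℕ) (q : M.Q) (x : ℕ → α) (k : ℕ) : ℕ :=
  (Finset.Icc 1 k).sup fun i => c (runFrom M q x i)

theorem le_maxC (M : DetAuto α) (c : M.Q → ℕ) (q : M.Q) (x : ℕ → α) (k i : ℕ)
    (h1 : 1 ≤ i) (h2 : i ≤ k) : c (runFrom M q x i) ≤ maxC M c q x k :=
  Finset.le_sup (f := fun i => c (runFrom M q x i)) (Finset.mem_Icc.2 ⟨h1, h2⟩)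

theorem maxC_attained (M : DetAuto α) (c : M.Q → ℕ) (q : M.Q) (x : ℕ → α) (k : ℕ)
    (hk : 0 < k) : ∃ i, 1 ≤ i ∧ i ≤ k ∧ c (runFrom M q x i) = maxC M c q x k := by
  obtain ⟨i, hi, he⟩ := Finset.exists_mem_eq_sup (Finset.Icc 1 k)
    ⟨1, Finset.mem_Icc.2 ⟨le_refl 1, hk⟩⟩ (fun i => c (runFrom M q x i))
  exact ⟨i, (Finset.mem_Icc.1 hi).1, (Finset.mem_Icc.1 hi).2, he.symm⟩

def Reach (M : DetAuto α) (q : M.Q) : Prop := ∃ x n, runFrom M M.init x n = q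

def Pattern (M : DetAuto α) (c : M.Q → ℕ) : Prop :=
  ∃ q, Reach M q ∧ ∃ u k1 v k2, 0 < k1 ∧ 0 < k2 ∧
    runFrom M q u k1 = q ∧ runFrom M q v k2 = q ∧
    Odd (maxC M c q u k1) ∧ Even (maxC M c q v k2) ∧
    maxC M c q u k1 < maxC M c q v k2

theorem freq_fiber {Q : Type} [Fintype Q] (f : ℕ → Q) (p : ℕ → Prop)
    (h : ∃ᶠ n in atTop, p n) : ∃ q, ∃ᶠ n in atTop, p n ∧ f n = q := by
  by_contra hc
  push_neg at hc
  have h2 : ∀ᶠ n in atTop, ∀ q, ¬(p n ∧ f n = q) :=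
    eventually_all.2 fun q => ((hc q).mono fun n h h' => h h'.1 h'.2)
  obtain ⟨n, hn, hn2⟩ := h.and_eventually h2 |>.exists
  exact hn2 (f n) ⟨hn, rfl⟩

theorem eventually_recurrent {Q : Type} [Fintype Q] (f : ℕ → Q) :
    ∃ N, ∀ n ≥ N, ∃ᶠ m in atTop, f m = f n := by
  have h : ∀ᶠ n in atTop, ∀ q : Q, (¬∃ᶠ m in atTop, f m = q) → f n ≠ q := by
    rw [eventually_all]
    intro q
    by_cases hq : ∃ᶠ m in atTop, f m = q
    · exact Eventually.of_forall fun n h' => absurd hq h'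
    · exact (not_frequently.1 hq).mono fun n h1 _ => h1
  obtain ⟨N, hN⟩ := eventually_atTop.1 h
  refine ⟨N, fun n hn => ?_⟩
  by_contra hc
  exact hN n hn (f n) hc rfl

theorem exists_loop (M : DetAuto α) (c : M.Q → ℕ) (x : ℕ → α) (q : M.Q) (m N : ℕ)
    (hrecq : ∃ᶠ n in atTop, M.run x n = q)
    (hm : ∃ᶠ n in atTop, c (M.run x n) = m)
    (hub : ∀ n ≥ N, c (M.run x n) ≤ m) :
    ∃ w k, 0 < k ∧ runFrom M q w k = q ∧ maxC M c q w k = m := by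
  obtain ⟨n1, hn1N, hn1⟩ := frequently_atTop.1 hrecq N
  obtain ⟨n2, hn2gt, hn2⟩ := frequently_atTop.1 hm (n1 + 1)
  obtain ⟨n3, hn3gt, hn3⟩ := frequently_atTop.1 hrecq (n2 + 1)
  have hn12 : n1 < n2 := hn2gt
  have hn23 : n2 < n3 := hn3gt
  refine ⟨fun i => x (n1 + i), n3 - n1, by omega, ?_, ?_⟩
  · have := run_shift M x n1 (n3 - n1)
    rw [hn1] at this
    rw [← this]
    rw [show n1 + (n3 - n1) = n3 by omega, hn3]
  · apply le_antisymm
    · apply Finset.sup_le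
      intro i hi
      have : runFrom M q (fun i => x (n1 + i)) i = M.run x (n1 + i) := by
        have := run_shift M x n1 i; rw [hn1] at this; exact this.symm
      rw [this]
      exact hub (n1 + i) (by omega)
    · have h2 : runFrom M q (fun i => x (n1 + i)) (n2 - n1) = M.run x n2 := by
        have := run_shift M x n1 (n2 - n1); rw [hn1] at this
        rw [show n1 + (n2 - n1) = n2 by omega] at this; exact this.symm
      calc m = c (runFrom M q (fun i => x (n1 + i)) (n2 - n1)) := by rw [h2, hn2]
        _ ≤ _ := le_maxC M c q _ (n3 - n1) (n2 - n1) (by omega) (by omega)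


theorem not_both {Sig : Type} (L : Set (ℕ → Sig))
    (h1 : DBWRecognizable L) (h2 : ∃ R : Transducer Bool Sig, DBWRefuter L R) : False := by
  classical
  obtain ⟨M, acc, hM⟩ := h1
  obtain ⟨T, hT⟩ := h2
  set step : T.S × M.Q → T.S × M.Q := fun p =>
    let s' := T.ρ p.1 (decide (p.2 ∈ acc)); (s', M.δ p.2 (T.τ s')) with hstep
  set z : ℕ → T.S × M.Q := fun n => step^[n] (T.init, M.init) with hzdef
  set y : ℕ → Bool := fun n => decide ((z n).2 ∈ acc) with hy
  have hz : ∀ n, z (n + 1) = step (z n) := fun n => Function.iterate_succ_apply' step n _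
  have hrun1 : ∀ n, T.run y n = (z n).1 := by
    intro n
    induction n with
    | zero => rfl
    | succ n ih =>
      rw [Transducer.run, ih, hz]
  have hrun2 : ∀ n, M.run (T.out y) n = (z n).2 := by
    intro n
    induction n with
    | zero => rfl
    | succ n ih =>
      rw [DetAuto.run, ih, hz]
      show M.δ (z n).2 (T.τ (T.run y (n+1))) = _
      rw [hrun1 (n+1), hz]
  have key : ∀ n, (y n = true) ↔ M.run (T.out y) n ∈ acc := by
    intro n
    rw [hrun2 n, hy]
    simp
  have hfin := hT y
  have hdbw := hM (T.out y)
  have hiff : {j | y j = true}.Infinite ↔ ∃ᶠ n in atTop, M.run (T.out y) n ∈ acc := by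
    rw [← Nat.frequently_atTop_iff_infinite]
    exact frequently_congr (Eventually.of_forall fun n => key n)
  rw [← hiff] at hdbw
  by_cases h : {j | y j = true}.Finite
  · exact absurd (hdbw.1 (hfin.2 h)) h.not_infinite
  · exact h (hfin.1 (hdbw.2 h))


theorem dbw_of_not_pattern {Sig : Type} (M : DetAuto Sig) (c : M.Q → ℕ)
    (L : Set (ℕ → Sig)) (hM : ∀ x, x ∈ L ↔ ParityAccept M c x)
    (hp : ¬Pattern M c) : DBWRecognizable L := by
  classical
  refine ⟨M, {q | Odd (c q) ∧ ∀ w k, 0 < k → runFrom M q w k = q →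
    Even (maxC M c q w k) → maxC M c q w k ≤ c q}, fun x => ?_⟩
  rw [hM]
  constructor
  · rintro ⟨m, hmodd, hmfreq, hmmax⟩
    obtain ⟨q, hq⟩ := freq_fiber (M.run x) _ hmfreq
    have hcq : c q = m := by
      obtain ⟨n, h1, h2⟩ := hq.exists
      rw [← h2, h1]
    have hqfreq : ∃ᶠ n in atTop, M.run x n = q := hq.mono fun n h => h.2
    obtain ⟨N, hN⟩ := eventually_recurrent (M.run x)
    have hub : ∀ n ≥ N, c (M.run x n) ≤ m := fun n hn =>
      hmmax _ ((hN n hn).mono fun k hk => by rw [hk])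
    obtain ⟨wu, ku, hku, hwu, hmaxu⟩ := exists_loop M c x q m N hqfreq hmfreq hub
    have hreach : Reach M q := by
      obtain ⟨n, hn⟩ := hqfreq.exists
      exact ⟨x, n, by rw [← run_eq_runFrom, hn]⟩
    have hqmem : q ∈ {q | Odd (c q) ∧ ∀ w k, 0 < k → runFrom M q w k = q →
        Even (maxC M c q w k) → maxC M c q w k ≤ c q} := by
      refine ⟨hcq ▸ hmodd, fun w k hk hloop heven => ?_⟩
      by_contra hgt
      push_neg at hgt
      exact hp ⟨q, hreach, wu, ku, w, k, hku, hk, hwu, hloop,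
        hmaxu ▸ (hcq ▸ hmodd), heven, by rw [hmaxu, ← hcq]; exact hgt⟩
    exact hqfreq.mono fun n hn => hn ▸ hqmem
  · intro hfreq
    obtain ⟨q, hq⟩ := freq_fiber (M.run x) _ hfreq
    have hqmem : q ∈ {q | Odd (c q) ∧ ∀ w k, 0 < k → runFrom M q w k = q →
        Even (maxC M c q w k) → maxC M c q w k ≤ c q} := by
      obtain ⟨n, h1, h2⟩ := hq.exists
      rw [← h2]; exact h1
    have hqfreq : ∃ᶠ n in atTop, M.run x n = q := hq.mono fun n h => h.2
    obtain ⟨N, hN⟩ := eventually_recurrent (M.run x)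
    set C : Finset ℕ := (Finset.univ.image c).filter
      (fun m' => ∃ᶠ n in atTop, c (M.run x n) = m') with hC
    have hCne : C.Nonempty := by
      refine ⟨c q, Finset.mem_filter.2 ⟨Finset.mem_image.2 ⟨q, Finset.mem_univ q, rfl⟩, ?_⟩⟩
      exact hqfreq.mono fun n h => by rw [h]
    set m := C.max' hCne with hm
    have hmfreq : ∃ᶠ n in atTop, c (M.run x n) = m :=
      (Finset.mem_filter.1 (C.max'_mem hCne)).2
    have hmmax : ∀ m', (∃ᶠ n in atTop, c (M.run x n) = m') → m' ≤ m := by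
      intro m' h'
      apply C.le_max'
      obtain ⟨n, hn⟩ := h'.exists
      exact Finset.mem_filter.2 ⟨Finset.mem_image.2 ⟨M.run x n, Finset.mem_univ _, hn⟩, h'⟩
    have hub : ∀ n ≥ N, c (M.run x n) ≤ m := fun n hn =>
      hmmax _ ((hN n hn).mono fun k hk => by rw [hk])
    have hcqle : c q ≤ m := hmmax _ (hqfreq.mono fun n h => by rw [h])
    refine ⟨m, ?_, hmfreq, hmmax⟩
    rcases Nat.even_or_odd m with he | ho
    · exfalso
      obtain ⟨wv, kv, hkv, hwv, hmaxv⟩ := exists_loop M c x q m N hqfreq hmfreq hub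
      have := hqmem.2 wv kv hkv hwv (hmaxv ▸ he)
      rw [hmaxv] at this
      have : m = c q := le_antisymm this hcqle
      rw [this] at he
      exact (Nat.not_even_iff_odd.2 hqmem.1) he
    · exact ho


abbrev RS (n0 k1 k2 : ℕ) : Type := Option (Fin n0 ⊕ (Fin k1 × Bool) ⊕ Fin k2)

section Refuter

variable {Sig : Type} (n0 k1 k2 : ℕ) (hk1 : 0 < k1) (hk2 : 0 < k2)

def uent : RS n0 k1 k2 := some (Sum.inr (Sum.inl (⟨0, hk1⟩, false)))

def rstep : RS n0 k1 k2 → Bool → RS n0 k1 k2 := fun s b =>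
  match s with
  | none => if h : 0 < n0 then some (Sum.inl ⟨0, h⟩) else uent n0 k1 k2 hk1
  | some (Sum.inl i) =>
      if h : (i : ℕ) + 1 < n0 then some (Sum.inl ⟨i + 1, h⟩) else uent n0 k1 k2 hk1
  | some (Sum.inr (Sum.inl (i, p))) =>
      if h : (i : ℕ) + 1 < k1 then some (Sum.inr (Sum.inl (⟨i + 1, h⟩, p || b)))
      else if p || b then some (Sum.inr (Sum.inr ⟨0, hk2⟩)) else uent n0 k1 k2 hk1
  | some (Sum.inr (Sum.inr i)) =>
      if h : (i : ℕ) + 1 < k2 then some (Sum.inr (Sum.inr ⟨i + 1, h⟩))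
      else uent n0 k1 k2 hk1

variable (x0 u v : ℕ → Sig)

def rtau : RS n0 k1 k2 → Sig := fun s =>
  match s with
  | none => u 0
  | some (Sum.inl i) => x0 i
  | some (Sum.inr (Sum.inl (i, _))) => u i
  | some (Sum.inr (Sum.inr i)) => v i

abbrev RT : Transducer Bool Sig :=
  { S := RS n0 k1 k2, init := none, ρ := rstep n0 k1 k2 hk1 hk2,
    τ := rtau n0 k1 k2 x0 u v }

variable (M : DetAuto Sig) (q : M.Q)

def interp : RS n0 k1 k2 → M.Q := fun s =>
  match s with
  | none => M.init
  | some (Sum.inl i) => runFrom M M.init x0 ((i : ℕ) + 1)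
  | some (Sum.inr (Sum.inl (i, _))) => runFrom M q u ((i : ℕ) + 1)
  | some (Sum.inr (Sum.inr i)) => runFrom M q v ((i : ℕ) + 1)

theorem interp_step (hx0 : runFrom M M.init x0 n0 = q)
    (hu : runFrom M q u k1 = q) (hv : runFrom M q v k2 = q)
    (s : RS n0 k1 k2) (b : Bool) :
    M.δ (interp n0 k1 k2 x0 u v M q s)
      (rtau n0 k1 k2 x0 u v (rstep n0 k1 k2 hk1 hk2 s b)) =
    interp n0 k1 k2 x0 u v M q (rstep n0 k1 k2 hk1 hk2 s b) := by
  rcases s with _ | (i | (⟨i, p⟩ | i))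
  · by_cases h : 0 < n0
    · simp [rstep, h, interp, rtau, runFrom]
    · have h0 : n0 = 0 := by omega
      have : M.init = q := by rw [← hx0, h0]; rfl
      simp [rstep, h, interp, rtau, uent, runFrom, this]
  · by_cases h : (i : ℕ) + 1 < n0
    · simp [rstep, h, interp, rtau, runFrom]
    · have h0 : (i : ℕ) + 1 = n0 := by have := i.isLt; omega
      have hq : M.δ (runFrom M M.init x0 (i : ℕ)) (x0 (i : ℕ)) = q := by
        rw [show M.δ (runFrom M M.init x0 (i : ℕ)) (x0 (i : ℕ))
          = runFrom M M.init x0 ((i : ℕ) + 1) from rfl, h0, hx0]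
      simp [rstep, h, interp, rtau, uent, runFrom, hq]
  · by_cases h : (i : ℕ) + 1 < k1
    · simp [rstep, h, interp, rtau, runFrom]
    · have h0 : (i : ℕ) + 1 = k1 := by have := i.isLt; omega
      have hq : M.δ (runFrom M q u (i : ℕ)) (u (i : ℕ)) = q := by
        rw [show M.δ (runFrom M q u (i : ℕ)) (u (i : ℕ))
          = runFrom M q u ((i : ℕ) + 1) from rfl, h0, hu]
      by_cases hb : (p || b) = true
      · simp [rstep, h, hb, interp, rtau, uent, runFrom, hq]
      · simp [rstep, h, hb, interp, rtau, uent, runFrom, hq]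
  · by_cases h : (i : ℕ) + 1 < k2
    · simp [rstep, h, interp, rtau, runFrom]
    · have h0 : (i : ℕ) + 1 = k2 := by have := i.isLt; omega
      have hq : M.δ (runFrom M q v (i : ℕ)) (v (i : ℕ)) = q := by
        rw [show M.δ (runFrom M q v (i : ℕ)) (v (i : ℕ))
          = runFrom M q v ((i : ℕ) + 1) from rfl, h0, hv]
      simp [rstep, h, interp, rtau, uent, runFrom, hq]

theorem interp_run (hx0 : runFrom M M.init x0 n0 = q)
    (hu : runFrom M q u k1 = q) (hv : runFrom M q v k2 = q)
    (y : ℕ → Bool) (n : ℕ) :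
    M.run ((RT n0 k1 k2 hk1 hk2 x0 u v).out y) n =
      interp n0 k1 k2 x0 u v M q ((RT n0 k1 k2 hk1 hk2 x0 u v).run y n) := by
  induction n with
  | zero => rfl
  | succ n ih =>
    rw [DetAuto.run, ih]
    show M.δ _ ((RT n0 k1 k2 hk1 hk2 x0 u v).τ ((RT n0 k1 k2 hk1 hk2 x0 u v).run y (n+1))) = _
    rw [Transducer.run]
    exact interp_step n0 k1 k2 hk1 hk2 x0 u v M q hx0 hu hv _ (y n)


def InUV : RS n0 k1 k2 → Prop := fun s =>
  match s with
  | some (Sum.inr _) => True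
  | _ => False

theorem inuv_step (s : RS n0 k1 k2) (b : Bool) (h : InUV n0 k1 k2 s) :
    InUV n0 k1 k2 (rstep n0 k1 k2 hk1 hk2 s b) := by
  rcases s with _ | (i | (⟨i, p⟩ | i))
  · exact absurd h (by simp [InUV])
  · exact absurd h (by simp [InUV])
  · by_cases h1 : (i : ℕ) + 1 < k1
    · simp [rstep, h1, InUV]
    · by_cases hb : (p || b) = true <;> simp [rstep, h1, hb, InUV, uent]
  · by_cases h1 : (i : ℕ) + 1 < k2 <;> simp [rstep, h1, InUV, uent]

theorem phase (y : ℕ → Bool) (n : ℕ) :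
    ((RT n0 k1 k2 hk1 hk2 x0 u v).run y n = none ∧ n = 0) ∨
    (∃ i : Fin n0, (RT n0 k1 k2 hk1 hk2 x0 u v).run y n = some (Sum.inl i) ∧ (i : ℕ) + 1 = n) ∨
    InUV n0 k1 k2 ((RT n0 k1 k2 hk1 hk2 x0 u v).run y n) := by
  induction n with
  | zero => exact Or.inl ⟨rfl, rfl⟩
  | succ n ih =>
    have hstep : (RT n0 k1 k2 hk1 hk2 x0 u v).run y (n + 1) =
        rstep n0 k1 k2 hk1 hk2 ((RT n0 k1 k2 hk1 hk2 x0 u v).run y n) (y n) := rfl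
    rcases ih with ⟨h1, h2⟩ | ⟨i, h1, h2⟩ | h1
    · rw [hstep, h1]
      by_cases h : 0 < n0
      · exact Or.inr (Or.inl ⟨⟨0, h⟩, by simp [rstep, h], by simp [h2]⟩)
      · exact Or.inr (Or.inr (by simp [rstep, h, uent, InUV]))
    · rw [hstep, h1]
      by_cases h : (i : ℕ) + 1 < n0
      · exact Or.inr (Or.inl ⟨⟨(i : ℕ) + 1, h⟩, by simp [rstep, h], by simp [h2]⟩)
      · exact Or.inr (Or.inr (by simp [rstep, h, uent, InUV]))
    · exact Or.inr (Or.inr (hstep ▸ inuv_step n0 k1 k2 hk1 hk2 _ (y n) h1))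

theorem inuv_of_ge (y : ℕ → Bool) (n : ℕ) (hn : n0 + 1 ≤ n) :
    InUV n0 k1 k2 ((RT n0 k1 k2 hk1 hk2 x0 u v).run y n) := by
  rcases phase n0 k1 k2 hk1 hk2 x0 u v y n with ⟨_, h2⟩ | ⟨i, _, h2⟩ | h1
  · omega
  · have := i.isLt; omega
  · exact h1

def dmeas : RS n0 k1 k2 → ℕ := fun s =>
  match s with
  | none => n0 + 1
  | some (Sum.inl i) => n0 - (i : ℕ)
  | some (Sum.inr (Sum.inl (i, false))) => if (i : ℕ) = 0 then 0 else k1 - (i : ℕ)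
  | some (Sum.inr (Sum.inl (i, true))) => (k1 - (i : ℕ)) + k2
  | some (Sum.inr (Sum.inr i)) => k2 - (i : ℕ)

theorem dmeas_zero (s : RS n0 k1 k2) (h : dmeas n0 k1 k2 s = 0) : s = uent n0 k1 k2 hk1 := by
  rcases s with _ | (i | (⟨i, p⟩ | i))
  · simp [dmeas] at h
  · have := i.isLt; simp [dmeas] at h <;> omega
  · rcases p with _ | _
    · by_cases h0 : (i : ℕ) = 0
      · simp [uent]; exact Fin.ext h0
      · have := i.isLt; simp [dmeas, h0] at h <;> omega
    · have := i.isLt; simp [dmeas] at h <;> omega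
  · have := i.isLt; simp [dmeas] at h <;> omega

theorem dmeas_dec (s : RS n0 k1 k2) (h : s ≠ uent n0 k1 k2 hk1) :
    dmeas n0 k1 k2 (rstep n0 k1 k2 hk1 hk2 s false) < dmeas n0 k1 k2 s := by
  rcases s with _ | (i | (⟨i, p⟩ | i))
  · by_cases h1 : 0 < n0
    · simp [rstep, h1, dmeas] <;> omega
    · simp [rstep, h1, uent, dmeas] <;> omega
  · have := i.isLt
    by_cases h1 : (i : ℕ) + 1 < n0
    · simp [rstep, h1, dmeas] <;> omega
    · simp [rstep, h1, uent, dmeas] <;> omega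
  · have := i.isLt
    rcases p with _ | _
    · have h0 : (i : ℕ) ≠ 0 := by
        intro hc
        exact h (by simp [uent]; exact Fin.ext hc)
      by_cases h1 : (i : ℕ) + 1 < k1
      · simp [rstep, h1, dmeas, h0] <;> omega
      · simp [rstep, h1, uent, dmeas, h0] <;> omega
    · by_cases h1 : (i : ℕ) + 1 < k1
      · simp [rstep, h1, dmeas] <;> omega
      · simp [rstep, h1, dmeas] <;> omega
  · have := i.isLt
    by_cases h1 : (i : ℕ) + 1 < k2
    · simp [rstep, h1, dmeas] <;> omega
    · simp [rstep, h1, uent, dmeas] <;> omega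

theorem reach_uent (y : ℕ → Bool) (D N : ℕ) (hy : ∀ n ≥ N, y n = false)
    (hd : dmeas n0 k1 k2 ((RT n0 k1 k2 hk1 hk2 x0 u v).run y N) ≤ D) :
    ∃ N' ≥ N, (RT n0 k1 k2 hk1 hk2 x0 u v).run y N' = uent n0 k1 k2 hk1 := by
  induction D generalizing N with
  | zero =>
    exact ⟨N, le_refl N, dmeas_zero n0 k1 k2 hk1 _ (by omega)⟩
  | succ D ih =>
    by_cases h : (RT n0 k1 k2 hk1 hk2 x0 u v).run y N = uent n0 k1 k2 hk1
    · exact ⟨N, le_refl N, h⟩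
    · have hstep : (RT n0 k1 k2 hk1 hk2 x0 u v).run y (N + 1) =
        rstep n0 k1 k2 hk1 hk2 ((RT n0 k1 k2 hk1 hk2 x0 u v).run y N) false := by
        rw [show (RT n0 k1 k2 hk1 hk2 x0 u v).run y (N + 1) =
          rstep n0 k1 k2 hk1 hk2 ((RT n0 k1 k2 hk1 hk2 x0 u v).run y N) (y N) from rfl,
          hy N (le_refl N)]
      have hlt := dmeas_dec n0 k1 k2 hk1 hk2 _ h
      obtain ⟨N', hN', he⟩ := ih (N + 1) (fun n hn => hy n (by omega))
        (by rw [hstep]; omega)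
      exact ⟨N', by omega, he⟩


theorem u_cycle (y : ℕ → Bool) (N : ℕ)
    (hN : (RT n0 k1 k2 hk1 hk2 x0 u v).run y N = uent n0 k1 k2 hk1)
    (hy : ∀ n ≥ N, y n = false) (j : ℕ) :
    (RT n0 k1 k2 hk1 hk2 x0 u v).run y (N + j) =
      some (Sum.inr (Sum.inl (⟨j % k1, Nat.mod_lt j hk1⟩, false))) := by
  induction j with
  | zero =>
    rw [Nat.add_zero, hN]
    simp [uent]
  | succ j ih =>
    have hstep : (RT n0 k1 k2 hk1 hk2 x0 u v).run y (N + j + 1) =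
        rstep n0 k1 k2 hk1 hk2 ((RT n0 k1 k2 hk1 hk2 x0 u v).run y (N + j)) (y (N + j)) := rfl
    rw [show N + (j + 1) = N + j + 1 from rfl, hstep, ih, hy (N + j) (by omega)]
    have hmod : (j + 1) % k1 = (j % k1 + 1) % k1 := by
      conv_rhs => rw [Nat.mod_add_mod]
    by_cases h : j % k1 + 1 < k1
    · have h2 : (j + 1) % k1 = j % k1 + 1 := by rw [hmod, Nat.mod_eq_of_lt h]
      simp [rstep, h]
      rw [h2]
    · have hl : j % k1 < k1 := Nat.mod_lt j hk1
      have h2 : (j + 1) % k1 = 0 := by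
        rw [hmod, show j % k1 + 1 = k1 by omega, Nat.mod_self]
      simp [rstep, h, uent]
      rw [h2]

theorem v_fwd (y : ℕ → Bool) (n : ℕ)
    (hn : (RT n0 k1 k2 hk1 hk2 x0 u v).run y n = some (Sum.inr (Sum.inr ⟨0, hk2⟩)))
    (j : ℕ) (hj : j < k2) :
    (RT n0 k1 k2 hk1 hk2 x0 u v).run y (n + j) = some (Sum.inr (Sum.inr ⟨j, hj⟩)) := by
  induction j with
  | zero => rw [Nat.add_zero, hn]
  | succ j ih =>
    have hj' : j < k2 := by omega
    have hstep : (RT n0 k1 k2 hk1 hk2 x0 u v).run y (n + j + 1) =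
        rstep n0 k1 k2 hk1 hk2 ((RT n0 k1 k2 hk1 hk2 x0 u v).run y (n + j)) (y (n + j)) := rfl
    rw [show n + (j + 1) = n + j + 1 from rfl, hstep, ih hj']
    simp [rstep, hj]

theorem v_bwd (y : ℕ → Bool) (j : ℕ) (hj : j < k2) : ∀ n,
    (RT n0 k1 k2 hk1 hk2 x0 u v).run y n = some (Sum.inr (Sum.inr ⟨j, hj⟩)) →
    (RT n0 k1 k2 hk1 hk2 x0 u v).run y (n - j) = some (Sum.inr (Sum.inr ⟨0, hk2⟩)) := by
  induction j with
  | zero => intro n hn; rw [Nat.sub_zero, hn]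
  | succ j ih =>
    intro n hn
    cases n with
    | zero => exact absurd hn (by simp [Transducer.run, RT])
    | succ n' =>
      have hstep : (RT n0 k1 k2 hk1 hk2 x0 u v).run y (n' + 1) =
          rstep n0 k1 k2 hk1 hk2 ((RT n0 k1 k2 hk1 hk2 x0 u v).run y n') (y n') := rfl
      rw [hstep] at hn
      have hj' : j < k2 := by omega
      have hprev : (RT n0 k1 k2 hk1 hk2 x0 u v).run y n' = some (Sum.inr (Sum.inr ⟨j, hj'⟩)) := by
        rcases hs : (RT n0 k1 k2 hk1 hk2 x0 u v).run y n' with _ | (i | (⟨i, p⟩ | i)) <;>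
          rw [hs] at hn
        · by_cases h1 : 0 < n0 <;> simp [rstep, h1, uent] at hn
        · by_cases h1 : (i : ℕ) + 1 < n0 <;> simp [rstep, h1, uent] at hn
        · by_cases h1 : (i : ℕ) + 1 < k1
          · simp [rstep, h1] at hn
          · by_cases hb : (p || y n') = true <;> simp [rstep, h1, hb, uent] at hn
        · by_cases h1 : (i : ℕ) + 1 < k2 <;> simp [rstep, h1, uent] at hn
          have : (i : ℕ) = j := by omega
          rw [show i = (⟨j, hj'⟩ : Fin k2) from Fin.ext this]
      have := ih hj' n' hprev
      rw [show n' + 1 - (j + 1) = n' - j by omega]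
      exact this


theorem pend_to_v0 (y : ℕ → Bool) (t : ℕ) : ∀ n (i : ℕ) (hi : i < k1), k1 - i ≤ t →
    (RT n0 k1 k2 hk1 hk2 x0 u v).run y n = some (Sum.inr (Sum.inl (⟨i, hi⟩, true))) →
    ∃ n' > n, (RT n0 k1 k2 hk1 hk2 x0 u v).run y n' = some (Sum.inr (Sum.inr ⟨0, hk2⟩)) := by
  induction t with
  | zero => intro n i hi ht _; omega
  | succ t ih =>
    intro n i hi ht hn
    have hstep : (RT n0 k1 k2 hk1 hk2 x0 u v).run y (n + 1) =
        rstep n0 k1 k2 hk1 hk2 ((RT n0 k1 k2 hk1 hk2 x0 u v).run y n) (y n) := rfl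
    rw [hn] at hstep
    by_cases h1 : i + 1 < k1
    · have : (RT n0 k1 k2 hk1 hk2 x0 u v).run y (n + 1) =
          some (Sum.inr (Sum.inl (⟨i + 1, h1⟩, true))) := by
        rw [hstep]; simp [rstep, h1]
      obtain ⟨n', hn', he⟩ := ih (n + 1) (i + 1) h1 (by omega) this
      exact ⟨n', by omega, he⟩
    · refine ⟨n + 1, by omega, ?_⟩
      rw [hstep]; simp [rstep, h1]

theorem true_to_v0 (y : ℕ → Bool) (n : ℕ) (hy : y n = true)
    (huv : InUV n0 k1 k2 ((RT n0 k1 k2 hk1 hk2 x0 u v).run y n)) :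
    ∃ n' ≥ n - k2, (RT n0 k1 k2 hk1 hk2 x0 u v).run y n' = some (Sum.inr (Sum.inr ⟨0, hk2⟩)) := by
  rcases hs : (RT n0 k1 k2 hk1 hk2 x0 u v).run y n with _ | (i | (⟨i, p⟩ | i)) <;>
    rw [hs] at huv
  · exact absurd huv (by simp [InUV])
  · exact absurd huv (by simp [InUV])
  · have hstep : (RT n0 k1 k2 hk1 hk2 x0 u v).run y (n + 1) =
        rstep n0 k1 k2 hk1 hk2 ((RT n0 k1 k2 hk1 hk2 x0 u v).run y n) (y n) := rfl
    rw [hs, hy] at hstep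
    by_cases h1 : (i : ℕ) + 1 < k1
    · have : (RT n0 k1 k2 hk1 hk2 x0 u v).run y (n + 1) =
          some (Sum.inr (Sum.inl (⟨(i : ℕ) + 1, h1⟩, true))) := by
        rw [hstep]; simp [rstep, h1]
      obtain ⟨n', hn', he⟩ := pend_to_v0 n0 k1 k2 hk1 hk2 x0 u v y (k1 - ((i : ℕ) + 1))
        (n + 1) ((i : ℕ) + 1) h1 (le_refl _) this
      exact ⟨n', by omega, he⟩
    · refine ⟨n + 1, by omega, ?_⟩
      rw [hstep]; simp [rstep, h1]
  · have := v_bwd n0 k1 k2 hk1 hk2 x0 u v y (i : ℕ) i.isLt n (by rw [hs])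
    exact ⟨n - (i : ℕ), by have := i.isLt; omega, this⟩

theorem freq_v0 (y : ℕ → Bool) (hinf : {j | y j = true}.Infinite) :
    ∃ᶠ n in atTop, (RT n0 k1 k2 hk1 hk2 x0 u v).run y n =
      some (Sum.inr (Sum.inr ⟨0, hk2⟩)) := by
  rw [frequently_atTop]
  intro N
  have hfr : ∃ᶠ n in atTop, y n = true := Nat.frequently_atTop_iff_infinite.2 hinf
  obtain ⟨n1, hn1, hy1⟩ := frequently_atTop.1 hfr (N + k2 + n0 + 1)
  have huv : InUV n0 k1 k2 ((RT n0 k1 k2 hk1 hk2 x0 u v).run y n1) :=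
    inuv_of_ge n0 k1 k2 hk1 hk2 x0 u v y n1 (by omega)
  obtain ⟨n', hn', he⟩ := true_to_v0 n0 k1 k2 hk1 hk2 x0 u v y n1 hy1 huv
  exact ⟨n', by omega, he⟩


theorem caseB (c : M.Q → ℕ)
    (hx0 : runFrom M M.init x0 n0 = q)
    (hu : runFrom M q u k1 = q) (hv : runFrom M q v k2 = q)
    (heven : Even (maxC M c q v k2))
    (hlt : maxC M c q u k1 < maxC M c q v k2)
    (y : ℕ → Bool) (hinf : {j | y j = true}.Infinite) :
    ¬ ParityAccept M c ((RT n0 k1 k2 hk1 hk2 x0 u v).out y) := by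
  set m2 := maxC M c q v k2 with hm2
  obtain ⟨i2, hi21, hi22, hc2⟩ := maxC_attained M c q v k2 hk2
  have hfm2 : ∃ᶠ n in atTop,
      c (M.run ((RT n0 k1 k2 hk1 hk2 x0 u v).out y) n) = m2 := by
    rw [frequently_atTop]
    intro N
    obtain ⟨n, hn, he⟩ := frequently_atTop.1 (freq_v0 n0 k1 k2 hk1 hk2 x0 u v y hinf) N
    refine ⟨n + (i2 - 1), by omega, ?_⟩
    have hv' := v_fwd n0 k1 k2 hk1 hk2 x0 u v y n he (i2 - 1) (by omega)
    rw [interp_run n0 k1 k2 hk1 hk2 x0 u v M q hx0 hu hv y (n + (i2 - 1)), hv']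
    show c (runFrom M q v ((i2 - 1) + 1)) = m2
    rw [show (i2 - 1) + 1 = i2 by omega]
    exact hc2
  have hub : ∀ n ≥ n0 + 1,
      c (M.run ((RT n0 k1 k2 hk1 hk2 x0 u v).out y) n) ≤ m2 := by
    intro n hn
    have huv := inuv_of_ge n0 k1 k2 hk1 hk2 x0 u v y n hn
    rw [interp_run n0 k1 k2 hk1 hk2 x0 u v M q hx0 hu hv y n]
    rcases hs : (RT n0 k1 k2 hk1 hk2 x0 u v).run y n with _ | (i | (⟨i, p⟩ | i)) <;>
      rw [hs] at huv
    · exact absurd huv (by simp [InUV])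
    · exact absurd huv (by simp [InUV])
    · show c (runFrom M q u ((i : ℕ) + 1)) ≤ m2
      have h1 : c (runFrom M q u ((i : ℕ) + 1)) ≤ maxC M c q u k1 :=
        le_maxC M c q u k1 ((i : ℕ) + 1) (by omega) (by have := i.isLt; omega)
      omega
    · show c (runFrom M q v ((i : ℕ) + 1)) ≤ m2
      exact le_maxC M c q v k2 ((i : ℕ) + 1) (by omega) (by have := i.isLt; omega)
  rintro ⟨m, hmodd, hmfr, hmmax⟩
  have h1 : m2 ≤ m := hmmax m2 hfm2
  have h2 : m ≤ m2 := by
    obtain ⟨n, hn, he⟩ := frequently_atTop.1 hmfr (n0 + 1)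
    rw [← he]
    exact hub n hn
  have hme : m = m2 := le_antisymm h2 h1
  rw [hme] at hmodd
  exact (Nat.not_even_iff_odd.2 hmodd) heven

theorem caseA (c : M.Q → ℕ)
    (hx0 : runFrom M M.init x0 n0 = q)
    (hu : runFrom M q u k1 = q) (hv : runFrom M q v k2 = q)
    (hodd : Odd (maxC M c q u k1))
    (y : ℕ → Bool) (hfin : {j | y j = true}.Finite) :
    ParityAccept M c ((RT n0 k1 k2 hk1 hk2 x0 u v).out y) := by
  obtain ⟨B, hB⟩ := hfin.bddAbove
  have hy : ∀ n ≥ B + 1, y n = false := by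
    intro n hn
    cases hyn : y n with
    | false => rfl
    | true => exact absurd (hB hyn) (by omega)
  obtain ⟨N1, hN1ge, hN1⟩ := reach_uent n0 k1 k2 hk1 hk2 x0 u v y
    (dmeas n0 k1 k2 ((RT n0 k1 k2 hk1 hk2 x0 u v).run y (B + 1))) (B + 1) hy (le_refl _)
  have hcyc := u_cycle n0 k1 k2 hk1 hk2 x0 u v y N1 hN1 (fun n hn => hy n (by omega))
  set m1 := maxC M c q u k1 with hm1
  obtain ⟨i1, hi11, hi12, hc1⟩ := maxC_attained M c q u k1 hk1
  refine ⟨m1, hodd, ?_, ?_⟩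
  · rw [frequently_atTop]
    intro N
    have hkN : N ≤ k1 * N := Nat.le_mul_of_pos_left N hk1
    refine ⟨N1 + ((i1 - 1) + k1 * N), by omega, ?_⟩
    rw [interp_run n0 k1 k2 hk1 hk2 x0 u v M q hx0 hu hv y _, hcyc ((i1 - 1) + k1 * N)]
    show c (runFrom M q u (((i1 - 1) + k1 * N) % k1 + 1)) = m1
    rw [Nat.add_mul_mod_self_left, Nat.mod_eq_of_lt (by omega : i1 - 1 < k1),
      show (i1 - 1) + 1 = i1 by omega]
    exact hc1
  · intro m' hm'
    obtain ⟨n, hn, he⟩ := frequently_atTop.1 hm' N1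
    rw [← he, show n = N1 + (n - N1) by omega,
      interp_run n0 k1 k2 hk1 hk2 x0 u v M q hx0 hu hv y _, hcyc (n - N1)]
    show c (runFrom M q u ((n - N1) % k1 + 1)) ≤ m1
    have := Nat.mod_lt (n - N1) hk1
    exact le_maxC M c q u k1 ((n - N1) % k1 + 1) (by omega) (by omega)

end Refuter

theorem refuter_of_pattern {Sig : Type} (M : DetAuto Sig) (c : M.Q → ℕ)
    (L : Set (ℕ → Sig)) (hM : ∀ x, x ∈ L ↔ ParityAccept M c x)
    (hp : Pattern M c) : ∃ R : Transducer Bool Sig, DBWRefuter L R := by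
  obtain ⟨q, ⟨x0, n0, hx0⟩, u, k1, v, k2, hk1, hk2, hu, hv, hodd, heven, hlt⟩ := hp
  refine ⟨RT n0 k1 k2 hk1 hk2 x0 u v, fun y => ?_⟩
  rcases Set.finite_or_infinite {j | y j = true} with hfin | hinf
  · exact iff_of_true
      ((hM _).2 (caseA n0 k1 k2 hk1 hk2 x0 u v M q c hx0 hu hv hodd y hfin)) hfin
  · exact iff_of_false
      (fun hL' => caseB n0 k1 k2 hk1 hk2 x0 u v M q c hx0 hu hv heven hlt y hinf
        ((hM _).1 hL'))
      (fun hf => Set.not_infinite.2 hf hinf)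


end Aux

/-- For every ω-regular language `L`, exactly one of the following holds:
(1) `L` is DBW-recognizable; (2) there exists a DBW-refuter for `L`. -/
theorem stmt_1 {Sig : Type} [Fintype Sig] (L : Set (ℕ → Sig)) (hL : OmegaRegular L) :
    Xor' (DBWRecognizable L) (∃ R : Transducer Bool Sig, DBWRefuter L R) := by
  obtain ⟨M, c, hM⟩ := hL
  by_cases hp : Aux.Pattern M c
  · obtain ⟨R, hR⟩ := Aux.refuter_of_pattern M c L hM hp
    exact Or.inr ⟨⟨R, hR⟩, fun hA => Aux.not_both L hA ⟨R, hR⟩⟩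
  · have hdbw := Aux.dbw_of_not_pattern M c L hM hp
    exact Or.inl ⟨hdbw, fun hR => Aux.not_both L hdbw hR⟩
end

section
/- Let A be a deterministic parity automaton over Σ with n states and let L = L(A). Then at least one of the following holds: (1) L is recognized by a deterministic Büchi automaton with at most n states; (2) there is a DBW-refuter for L with at most 2n states. -/
open Filter
set_option linter.unusedSectionVars false

namespace Stmt2

variable {Sig : Type} [Fintype Sig]

/-- `k`-step paths from `s` to `t` all of whose states after `s` have color `≤ b`. -/
def stepsLe (M : DetAuto Sig) (c : M.Q → ℕ) (b : ℕ) : ℕ → M.Q → M.Q → Prop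
  | 0 => fun s t => s = t
  | k + 1 => fun s t => ∃ ℓ, c (M.δ s ℓ) ≤ b ∧ stepsLe M c b k (M.δ s ℓ) t

def PathLe (M : DetAuto Sig) (c : M.Q → ℕ) (b : ℕ) (s t : M.Q) : Prop :=
  ∃ k, stepsLe M c b k s t

variable {M : DetAuto Sig} {c : M.Q → ℕ}

lemma stepsLe_mono {b b' : ℕ} (h : b ≤ b') :
    ∀ {k : ℕ} {s t : M.Q}, stepsLe M c b k s t → stepsLe M c b' k s t := by
  intro k
  induction k with
  | zero => intro s t hst; exact hst
  | succ k ih =>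
    rintro s t ⟨ℓ, hc, hrest⟩
    exact ⟨ℓ, hc.trans h, ih hrest⟩

lemma stepsLe_trans : ∀ {k₁ k₂ : ℕ} {s u t : M.Q}, stepsLe M c b k₁ s u →
    stepsLe M c b k₂ u t → stepsLe M c b (k₁ + k₂) s t := by
  intro k₁
  induction k₁ with
  | zero => intro k₂ s u t h1 h2; cases h1; simpa using h2
  | succ k ih =>
    rintro k₂ s u t ⟨ℓ, hc, hrest⟩ h2
    exact (by rw [Nat.succ_add]; exact ⟨ℓ, hc, ih hrest h2⟩ :
      stepsLe M c b (k + 1 + k₂) s t)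

lemma PathLe.refl (b : ℕ) (s : M.Q) : PathLe M c b s s := ⟨0, rfl⟩

lemma PathLe.trans {b : ℕ} {s u t : M.Q} (h1 : PathLe M c b s u) (h2 : PathLe M c b u t) :
    PathLe M c b s t := by
  obtain ⟨k₁, h1⟩ := h1; obtain ⟨k₂, h2⟩ := h2; exact ⟨k₁ + k₂, stepsLe_trans h1 h2⟩

lemma PathLe.mono {b b' : ℕ} (h : b ≤ b') {s t : M.Q} (hp : PathLe M c b s t) :
    PathLe M c b' s t := by
  obtain ⟨k, hk⟩ := hp; exact ⟨k, stepsLe_mono h hk⟩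

/-- the maximal color -/
def maxC (M : DetAuto Sig) (c : M.Q → ℕ) : ℕ := Finset.univ.sup c

lemma le_maxC (s : M.Q) : c s ≤ maxC M c := Finset.le_sup (Finset.mem_univ s)

lemma run_stepsLe (x : ℕ → Sig) (b : ℕ) :
    ∀ (d n₁ : ℕ), (∀ k, n₁ < k → k ≤ n₁ + d → c (M.run x k) ≤ b) →
      stepsLe M c b d (M.run x n₁) (M.run x (n₁ + d)) := by
  intro d
  induction d with
  | zero => intro n₁ _; rfl
  | succ d ih =>
    intro n₁ hcol
    refine ⟨x n₁, hcol (n₁ + 1) (Nat.lt_succ_self _) (by omega), ?_⟩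
    have : M.δ (M.run x n₁) (x n₁) = M.run x (n₁ + 1) := rfl
    rw [this]
    have := ih (n₁ + 1) (fun k hk1 hk2 => hcol k (by omega) (by omega))
    have harr : n₁ + 1 + d = n₁ + (d + 1) := by omega
    rwa [harr] at this

/-- pigeonhole: if a predicate on states holds infinitely often along a run,
some single state with the predicate is visited infinitely often. -/
lemma exists_infinite_fiber_of {ρ : ℕ → M.Q} {P : M.Q → Prop}
    (h : {n | P (ρ n)}.Infinite) : ∃ s, P s ∧ {n | ρ n = s}.Infinite := by
  by_contra hcon
  push_neg at hcon
  have hsub : {n | P (ρ n)} ⊆ ⋃ s ∈ {s : M.Q | P s}, {n | ρ n = s} := by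
    intro n hn
    simp only [Set.mem_iUnion]
    exact ⟨ρ n, hn, rfl⟩
  have hfin : (⋃ s ∈ {s : M.Q | P s}, {n | ρ n = s}).Finite := by
    refine Set.Finite.biUnion (Set.toFinite _) ?_
    intro s hs
    rcases Set.finite_or_infinite {n | ρ n = s} with hf | hf
    · exact hf
    · exact absurd (hcon s hs) hf
  exact h (hfin.subset hsub)

/-- eventually the run stays among states visited infinitely often -/
lemma eventually_infinite_fiber (ρ : ℕ → M.Q) :
    ∃ N, ∀ n, N ≤ n → {k | ρ k = ρ n}.Infinite := by
  have hfin : {n | ¬ {k | ρ k = ρ n}.Infinite}.Finite := by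
    by_contra h
    have h' : {n | ¬ {k | ρ k = ρ n}.Infinite}.Infinite := h
    obtain ⟨s, hs, hinf⟩ := exists_infinite_fiber_of (P := fun s => ¬ {k | ρ k = s}.Infinite) h'
    exact hs hinf
  obtain ⟨N, hN⟩ := hfin.bddAbove
  refine ⟨N + 1, fun n hn => ?_⟩
  by_contra hcon
  have := hN (show n ∈ {n | ¬ {k | ρ k = ρ n}.Infinite} from hcon)
  omega

end Stmt2
namespace Stmt2

variable {Sig : Type} [Fintype Sig]

set_option linter.unusedSectionVars false

/-- The "bad pattern": a reachable state `r` of odd color carrying a cycle of colors `≤ c r`,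
which also lies on a cycle through a state `p` of larger even color, with colors `≤ c p`. -/
def Bad (M : DetAuto Sig) (c : M.Q → ℕ) : Prop :=
  ∃ r p : M.Q, ∃ ℓr ℓp : Sig, ∃ x : ℕ → Sig, ∃ nr : ℕ,
    M.run x nr = r ∧ Odd (c r) ∧ Even (c p) ∧ c r < c p ∧
    PathLe M c (c p) r p ∧ PathLe M c (c p) p r ∧
    c (M.δ r ℓr) ≤ c r ∧ PathLe M c (c r) (M.δ r ℓr) r ∧
    c (M.δ p ℓp) ≤ c p ∧ PathLe M c (c p) (M.δ p ℓp) p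

/-- The Büchi acceptance set used when there is no bad pattern. -/
def alphaSet (M : DetAuto Sig) (c : M.Q → ℕ) : Set M.Q :=
  {s | Odd (c s) ∧ ∀ p, Even (c p) → c s < c p →
    ¬(PathLe M c (c p) s p ∧ PathLe M c (c p) p s)}

variable {M : DetAuto Sig} {c : M.Q → ℕ}

lemma dbw_ok (hnb : ¬ Bad M c) (x : ℕ → Sig) :
    ParityAccept M c x ↔ ∃ᶠ n in Filter.atTop, M.run x n ∈ alphaSet M c := by
  classical
  set ρ : ℕ → M.Q := M.run x with hρ
  obtain ⟨N, hN⟩ := eventually_infinite_fiber ρ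
  -- a state of maximal color among the infinitely visited ones
  have hFne : (Finset.univ.filter (fun s : M.Q => {k | ρ k = s}.Infinite)).Nonempty := by
    refine ⟨ρ N, ?_⟩
    simp only [Finset.mem_filter, Finset.mem_univ, true_and]
    exact hN N le_rfl
  obtain ⟨s₀, hs₀mem, hs₀max⟩ := Finset.exists_max_image _ c hFne
  simp only [Finset.mem_filter, Finset.mem_univ, true_and] at hs₀mem
  have hs₀max' : ∀ s : M.Q, {k | ρ k = s}.Infinite → c s ≤ c s₀ := by
    intro s hs
    exact hs₀max s (by simp only [Finset.mem_filter, Finset.mem_univ, true_and]; exact hs)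
  set a := c s₀ with ha
  -- colors after N are ≤ a
  have hcolN : ∀ k, N < k → c (ρ k) ≤ a := fun k hk => hs₀max' _ (hN k hk.le)
  -- connectivity among infinitely visited states
  have hconn : ∀ s t : M.Q, {k | ρ k = s}.Infinite → {k | ρ k = t}.Infinite →
      ∃ d, 0 < d ∧ stepsLe M c a d s t := by
    intro s t hs ht
    obtain ⟨n₁, hn₁mem, hn₁⟩ := hs.exists_gt N
    obtain ⟨n₂, hn₂mem, hn₂⟩ := ht.exists_gt n₁
    refine ⟨n₂ - n₁, by omega, ?_⟩
    have := run_stepsLe (M := M) (c := c) x a (n₂ - n₁) n₁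
      (fun k hk1 hk2 => hcolN k (by omega))
    rw [show n₁ + (n₂ - n₁) = n₂ by omega] at this
    rw [← hn₁mem, ← hn₂mem]
    exact this
  -- ParityAccept ↔ Odd a
  have hfreq_iff : ∀ m : ℕ, (∃ᶠ n in Filter.atTop, c (ρ n) = m) ↔
      ∃ s, {k | ρ k = s}.Infinite ∧ c s = m := by
    intro m
    constructor
    · intro h
      have hinf : {n | c (ρ n) = m}.Infinite := Nat.frequently_atTop_iff_infinite.mp h
      obtain ⟨s, hs1, hs2⟩ := exists_infinite_fiber_of (P := fun s => c s = m) hinf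
      exact ⟨s, hs2, hs1⟩
    · rintro ⟨s, hs, rfl⟩
      refine Nat.frequently_atTop_iff_infinite.mpr (hs.mono ?_)
      intro k hk
      simp only [Set.mem_setOf_eq] at hk ⊢
      rw [hk]
  have hpar : ParityAccept M c x ↔ Odd a := by
    constructor
    · rintro ⟨mm, hodd, hfr, hmax⟩
      have h1 : a ≤ mm := hmax a ((hfreq_iff a).mpr ⟨s₀, hs₀mem, rfl⟩)
      obtain ⟨s, hs, hcs⟩ := (hfreq_iff mm).mp hfr
      have h2 : mm ≤ a := hcs ▸ hs₀max' s hs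
      rwa [show mm = a by omega] at hodd
    · intro hodd
      refine ⟨a, hodd, (hfreq_iff a).mpr ⟨s₀, hs₀mem, rfl⟩, ?_⟩
      intro m' hm'
      obtain ⟨s, hs, hcs⟩ := (hfreq_iff m').mp hm'
      exact hcs ▸ hs₀max' s hs
  rw [hpar]
  constructor
  · -- Odd a → frequently in alphaSet
    intro hodd
    have hs₀α : s₀ ∈ alphaSet M c := by
      refine ⟨hodd, ?_⟩
      intro p hpe hlt ⟨hsp, hps⟩
      apply hnb
      -- build the bad pattern with r := s₀
      obtain ⟨d, hd, hcyc⟩ := hconn s₀ s₀ hs₀mem hs₀mem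
      obtain ⟨ℓr, hℓr1, hℓr2⟩ : ∃ ℓ, c (M.δ s₀ ℓ) ≤ a ∧ stepsLe M c a (d - 1) (M.δ s₀ ℓ) s₀ := by
        cases d with
        | zero => omega
        | succ d => obtain ⟨ℓ, h1, h2⟩ := hcyc; exact ⟨ℓ, h1, by simpa using h2⟩
      obtain ⟨k₁, hk₁⟩ := hps
      obtain ⟨k₂, hk₂⟩ := hsp
      have hkpos : 0 < k₁ + k₂ := by
        rcases Nat.eq_zero_or_pos (k₁ + k₂) with h | h
        · exfalso
          have hk10 : k₁ = 0 := by omega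
          have hk20 : k₂ = 0 := by omega
          rw [hk10] at hk₁; rw [hk20] at hk₂
          cases hk₁; cases hk₂
          omega
        · exact h
      have hcycp : stepsLe M c (c p) (k₁ + k₂) p p := stepsLe_trans hk₁ hk₂
      obtain ⟨ℓp, hℓp1, hℓp2⟩ : ∃ ℓ, c (M.δ p ℓ) ≤ c p ∧
          stepsLe M c (c p) (k₁ + k₂ - 1) (M.δ p ℓ) p := by
        cases hk : k₁ + k₂ with
        | zero => omega
        | succ d => rw [hk] at hcycp; obtain ⟨ℓ, h1, h2⟩ := hcycp; exact ⟨ℓ, h1, by simpa using h2⟩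
      obtain ⟨nvis, hnvis⟩ := hs₀mem.nonempty
      exact ⟨s₀, p, ℓr, ℓp, x, nvis, hnvis, hodd, hpe, hlt, ⟨k₂, hk₂⟩, ⟨k₁, hk₁⟩,
        hℓr1, ⟨d - 1, hℓr2⟩, hℓp1, ⟨k₁ + k₂ - 1, hℓp2⟩⟩
    have : {n | ρ n = s₀} ⊆ {n | ρ n ∈ alphaSet M c} := by
      intro n hn
      simp only [Set.mem_setOf_eq] at hn ⊢
      rw [hn]; exact hs₀α
    exact Nat.frequently_atTop_iff_infinite.mpr (hs₀mem.mono this)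
  · -- frequently in alphaSet → Odd a
    intro hfr
    have hinf : {n | ρ n ∈ alphaSet M c}.Infinite := Nat.frequently_atTop_iff_infinite.mp hfr
    obtain ⟨s, hsα, hsinf⟩ := exists_infinite_fiber_of (P := fun s => s ∈ alphaSet M c) hinf
    rcases Nat.even_or_odd a with he | ho
    · exfalso
      have hlt : c s < a := by
        have hle : c s ≤ a := hs₀max' s hsinf
        rcases Nat.lt_or_ge (c s) a with h | h
        · exact h
        · exfalso
          have hodd' : Odd (c s) := hsα.1
          rw [show c s = a by omega] at hodd'
          exact (Nat.not_odd_iff_even.mpr he) hodd' 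
      obtain ⟨d₁, _, h₁⟩ := hconn s s₀ hsinf hs₀mem
      obtain ⟨d₂, _, h₂⟩ := hconn s₀ s hs₀mem hsinf
      exact hsα.2 s₀ he hlt ⟨⟨d₁, h₁⟩, ⟨d₂, h₂⟩⟩
    · exact ho

end Stmt2
namespace Stmt2

attribute [local instance] Classical.propDecidable

variable {Sig : Type} [Fintype Sig]

set_option linter.unusedSectionVars false

variable (M : DetAuto Sig) (c : M.Q → ℕ)

/-- minimal color bound of a path from `s` to `t` -/
noncomputable def bR (t s : M.Q) : ℕ :=
  if h : ∃ β, PathLe M c β s t then Nat.find h else 0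

/-- minimal length of a `bR`-bounded path from `s` to `t` -/
noncomputable def dR (t s : M.Q) : ℕ :=
  if h : ∃ k, stepsLe M c (bR M c t s) k s t then Nat.find h else 0

variable {M c}

lemma bR_min {t s : M.Q} {β : ℕ} (hp : PathLe M c β s t) : bR M c t s ≤ β := by
  rw [bR, dif_pos ⟨β, hp⟩]
  exact Nat.find_min' _ hp

lemma bR_path {t s : M.Q} (h : ∃ β, PathLe M c β s t) : PathLe M c (bR M c t s) s t := by
  rw [bR, dif_pos h]
  exact Nat.find_spec h

lemma dR_spec {t s : M.Q} (h : ∃ β, PathLe M c β s t) :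
    stepsLe M c (bR M c t s) (dR M c t s) s t := by
  obtain ⟨k, hk⟩ := bR_path h
  have hex : ∃ k, stepsLe M c (bR M c t s) k s t := ⟨k, hk⟩
  rw [dR, dif_pos hex]
  exact Nat.find_spec hex

lemma dR_min {t s : M.Q} {k : ℕ} (hk : stepsLe M c (bR M c t s) k s t) : dR M c t s ≤ k := by
  have hex : ∃ k, stepsLe M c (bR M c t s) k s t := ⟨k, hk⟩
  rw [dR, dif_pos hex]
  exact Nat.find_min' _ hk

lemma dR_pos {t s : M.Q} (h : ∃ β, PathLe M c β s t) (hne : s ≠ t) : 0 < dR M c t s := by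
  rcases Nat.eq_zero_or_pos (dR M c t s) with h0 | h0
  · exfalso
    have := dR_spec h
    rw [h0] at this
    exact hne this
  · exact h0

lemma first_step {t s : M.Q} (hne : s ≠ t) (hre : ∃ β, PathLe M c β s t) :
    ∃ ℓ, c (M.δ s ℓ) ≤ bR M c t s ∧ stepsLe M c (bR M c t s) (dR M c t s - 1) (M.δ s ℓ) t := by
  have hd := dR_spec hre
  have hpos := dR_pos hre hne
  rcases hdk : dR M c t s with _ | d
  · omega
  · rw [hdk] at hd
    obtain ⟨ℓ, h1, h2⟩ := hd
    exact ⟨ℓ, h1, by simpa using h2⟩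

variable (M c)

/-- the memoryless strategy heading towards `t` (with `ℓt` the move at `t` itself). -/
noncomputable def tw (t : M.Q) (ℓt : Sig) (s : M.Q) : Sig :=
  if h : s ≠ t ∧ ∃ β, PathLe M c β s t then Classical.choose (first_step h.1 h.2) else ℓt

/-- the state dynamics induced by the strategy `tw` -/
noncomputable def gg (t : M.Q) (ℓt : Sig) (s : M.Q) : M.Q := M.δ s (tw M c t ℓt s)

variable {M c}

lemma tw_at_t {t : M.Q} {ℓt : Sig} : tw M c t ℓt t = ℓt := by
  rw [tw, dif_neg]
  rintro ⟨h, -⟩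
  exact h rfl

lemma gg_at_t {t : M.Q} {ℓt : Sig} : gg M c t ℓt t = M.δ t ℓt := by
  rw [gg, tw_at_t]

lemma tw_spec {t s : M.Q} {ℓt : Sig} (hne : s ≠ t) (hre : ∃ β, PathLe M c β s t) :
    c (gg M c t ℓt s) ≤ bR M c t s ∧
      stepsLe M c (bR M c t s) (dR M c t s - 1) (gg M c t ℓt s) t := by
  rw [gg, tw, dif_pos ⟨hne, hre⟩]
  exact Classical.choose_spec (first_step hne hre)

/-- one step of the strategy preserves any color bound admitting a path -/
lemma gg_preserve {t s : M.Q} {ℓt : Sig} {β : ℕ} (hs : PathLe M c β s t) (hne : s ≠ t) :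
    c (gg M c t ℓt s) ≤ β ∧ PathLe M c β (gg M c t ℓt s) t := by
  have hb : bR M c t s ≤ β := bR_min hs
  obtain ⟨h1, h2⟩ := tw_spec (ℓt := ℓt) hne ⟨β, hs⟩
  exact ⟨h1.trans hb, PathLe.mono hb ⟨_, h2⟩⟩

lemma gg_reach_aux {t : M.Q} {ℓt : Sig} :
    ∀ β d (s : M.Q), (∃ β', PathLe M c β' s t) → bR M c t s ≤ β → dR M c t s ≤ d →
      ∃ k, (gg M c t ℓt)^[k] s = t := by
  intro β
  induction β using Nat.strong_induction_on with
  | _ β ihβ =>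
    intro d
    induction d using Nat.strong_induction_on with
    | _ d ihd =>
      intro s hre hβ hd
      by_cases hst : s = t
      · exact ⟨0, hst⟩
      · obtain ⟨h1, h2⟩ := tw_spec (ℓt := ℓt) hst hre
        set s' := gg M c t ℓt s with hs'
        have hre' : ∃ β', PathLe M c β' s' t := ⟨bR M c t s, ⟨_, h2⟩⟩
        have hb' : bR M c t s' ≤ bR M c t s := bR_min ⟨_, h2⟩
        have step : ∀ k, (gg M c t ℓt)^[k] s' = t → ∃ k', (gg M c t ℓt)^[k'] s = t := by
          intro k hk
          exact ⟨k + 1, by rw [Function.iterate_succ_apply]; exact hk⟩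
        rcases Nat.lt_or_ge (bR M c t s') β with hlt | hge
        · obtain ⟨k, hk⟩ := ihβ (bR M c t s') hlt (dR M c t s') s' hre' le_rfl le_rfl
          exact step k hk
        · -- bR t s' = β = bR t s
          have hbeq : bR M c t s' = bR M c t s := by omega
          have hd' : dR M c t s' ≤ dR M c t s - 1 := by
            exact dR_min (by rw [hbeq]; exact h2)
          have hpos : 0 < dR M c t s := dR_pos hre hst
          obtain ⟨k, hk⟩ := ihd (dR M c t s') (by omega) s' hre' (by omega) le_rfl
          exact step k hk

lemma gg_reach {t : M.Q} {ℓt : Sig} {s : M.Q} (h : ∃ β, PathLe M c β s t) :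
    ∃ k, (gg M c t ℓt)^[k] s = t :=
  gg_reach_aux (bR M c t s) (dR M c t s) s h le_rfl le_rfl

end Stmt2
namespace Stmt2

attribute [local instance] Classical.propDecidable

variable {Sig : Type} [Fintype Sig]

set_option linter.unusedSectionVars false

variable {M : DetAuto Sig} {c : M.Q → ℕ}

lemma run_succ (x : ℕ → Sig) (n : ℕ) : M.run x (n + 1) = M.δ (M.run x n) (x n) := rfl

/-- Main analysis of the refuter dynamics. -/
lemma main_run (r p : M.Q) (ℓr ℓp : Sig)
    (hro : Odd (c r)) (hpe : Even (c p)) (hrp : c r < c p)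
    (h1 : PathLe M c (c p) r p) (h2 : PathLe M c (c p) p r)
    (h3 : c (M.δ r ℓr) ≤ c r) (h4 : PathLe M c (c r) (M.δ r ℓr) r)
    (h5 : c (M.δ p ℓp) ≤ c p) (h6 : PathLe M c (c p) (M.δ p ℓp) p)
    (hinit : PathLe M c (maxC M c) M.init r)
    (x : ℕ → Sig) (μ : ℕ → Bool) (y : ℕ → Bool)
    (hx : ∀ j, x j = if μ j = true then tw M c p ℓp (M.run x j) else tw M c r ℓr (M.run x j))
    (hμ : ∀ j, μ (j + 1) = if y (j + 1) = true then true
      else if M.run x j = p then false else μ j) :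
    ParityAccept M c x ↔ {j | y j = true}.Finite := by
  set m : ℕ → M.Q := M.run x with hm
  have hstep : ∀ j, m (j + 1) = if μ j = true then gg M c p ℓp (m j) else gg M c r ℓr (m j) := by
    intro j
    have : m (j + 1) = M.δ (m j) (x j) := rfl
    rw [this, hx j]
    by_cases hmj : μ j = true <;> simp [hmj, gg]
  have hpr : PathLe M c (maxC M c) p r := h2.mono (le_maxC p)
  have hrp' : PathLe M c (maxC M c) r p := h1.mono (le_maxC p)
  have hV : ∀ j, PathLe M c (maxC M c) (m j) r := by
    intro j
    induction j with
    | zero => exact hinit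
    | succ j ih =>
      rw [hstep j]
      by_cases hmj : μ j = true
      · simp only [hmj, if_true]
        by_cases hjp : m j = p
        · rw [hjp, gg_at_t]
          exact (h6.mono (le_maxC p)).trans hpr
        · exact ((gg_preserve (ℓt := ℓp) (ih.trans hrp') hjp).2).trans hpr
      · simp only [hmj, if_false]
        by_cases hjr : m j = r
        · rw [hjr, gg_at_t]
          exact h4.mono (le_maxC r)
        · exact (gg_preserve (ℓt := ℓr) ih hjr).2
  have hVp : ∀ j, PathLe M c (maxC M c) (m j) p := fun j => (hV j).trans hrp'
  -- mode true leads to a visit of p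
  have P1 : ∀ j, μ j = true → ∃ t, j ≤ t ∧ m t = p := by
    intro j hj
    have aux : ∀ K j, μ j = true → (gg M c p ℓp)^[K] (m j) = p → ∃ t, j ≤ t ∧ m t = p := by
      intro K
      induction K with
      | zero => intro j hj hK; exact ⟨j, le_rfl, hK⟩
      | succ K ih =>
        intro j hj hK
        by_cases hjp : m j = p
        · exact ⟨j, le_rfl, hjp⟩
        · have hμ' : μ (j + 1) = true := by
            rw [hμ j]
            by_cases hy : y (j + 1) = true <;> simp [hy, hjp, hj]
          have hm' : m (j + 1) = gg M c p ℓp (m j) := by rw [hstep j]; simp [hj]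
          have hK' : (gg M c p ℓp)^[K] (m (j + 1)) = p := by
            rw [hm', ← Function.iterate_succ_apply]
            exact hK
          obtain ⟨t, ht1, ht2⟩ := ih (j + 1) hμ' hK'
          exact ⟨t, by omega, ht2⟩
    obtain ⟨K, hK⟩ := gg_reach (ℓt := ℓp) ⟨maxC M c, hVp j⟩
    exact aux K j hj hK
  -- persistence of mode false
  have P2 : ∀ T, (∀ k, T ≤ k → y k ≠ true) → μ T = false → ∀ k, T ≤ k → μ k = false := by
    intro T hyT hT k
    induction k with
    | zero => intro h0; rwa [Nat.le_zero.mp h0] at hT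
    | succ k ih =>
      intro hk
      rcases Nat.lt_or_ge T (k + 1) with h | h
      · have hk' : T ≤ k := by omega
        rw [hμ k]
        have : y (k + 1) = false := by
          have := hyT (k + 1) (by omega)
          simp at this
          exact this
        simp only [this, Bool.false_eq_true, if_false]
        rw [ih hk']
        by_cases hp : m k = p <;> simp [hp]
      · have : T = k + 1 := by omega
        rwa [← this]
  -- σ-run once mode is false forever
  have P3 : ∀ T, (∀ k, T ≤ k → μ k = false) → ∀ i, m (T + i) = (gg M c r ℓr)^[i] (m T) := by
    intro T hf i
    induction i with
    | zero => rfl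
    | succ i ih =>
      rw [show T + (i + 1) = (T + i) + 1 by omega, hstep (T + i)]
      have : μ (T + i) = false := hf (T + i) (by omega)
      simp only [this, Bool.false_eq_true, if_false]
      rw [ih]
      exact (Function.iterate_succ_apply' _ _ _).symm
  -- region closures
  have hRa : ∀ s, c s ≤ c r ∧ PathLe M c (c r) s r →
      c (gg M c r ℓr s) ≤ c r ∧ PathLe M c (c r) (gg M c r ℓr s) r := by
    intro s hs
    by_cases hsr : s = r
    · rw [hsr, gg_at_t]; exact ⟨h3, h4⟩
    · exact gg_preserve hs.2 hsr
  have hRbπ : ∀ s, c s ≤ c p ∧ PathLe M c (c p) s p →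
      c (gg M c p ℓp s) ≤ c p ∧ PathLe M c (c p) (gg M c p ℓp s) p := by
    intro s hs
    by_cases hsp : s = p
    · rw [hsp, gg_at_t]; exact ⟨h5, h6⟩
    · exact gg_preserve hs.2 hsp
  have hRbσ : ∀ s, c s ≤ c p ∧ PathLe M c (c p) s p →
      c (gg M c r ℓr s) ≤ c p ∧ PathLe M c (c p) (gg M c r ℓr s) p := by
    intro s hs
    by_cases hsr : s = r
    · rw [hsr, gg_at_t]
      exact ⟨h3.trans hrp.le, (h4.mono hrp.le).trans h1⟩
    · have hsr' : PathLe M c (c p) s r := hs.2.trans h2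
      obtain ⟨ha, hb⟩ := gg_preserve (ℓt := ℓr) hsr' hsr
      exact ⟨ha, hb.trans h1⟩
  constructor
  · -- ParityAccept → finitely many accs; contrapositive
    intro hpar
    by_contra hnf
    have hinf : {j | y j = true}.Infinite := hnf
    -- p is visited frequently
    have hfreqp : ∀ N, ∃ n, N ≤ n ∧ m n = p := by
      intro N
      obtain ⟨j, hjmem, hjgt⟩ := hinf.exists_gt N
      have hj1 : 1 ≤ j := by omega
      have hμj : μ j = true := by
        rw [show j = (j - 1) + 1 by omega, hμ (j - 1)]
        rw [show (j - 1) + 1 = j by omega]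
        have hyj : y j = true := hjmem
        simp [hyj]
      obtain ⟨t, ht1, ht2⟩ := P1 j hμj
      exact ⟨t, by omega, ht2⟩
    obtain ⟨t₀, -, hp0⟩ := hfreqp 0
    have hRbev : ∀ i, c (m (t₀ + i)) ≤ c p ∧ PathLe M c (c p) (m (t₀ + i)) p := by
      intro i
      induction i with
      | zero => rw [Nat.add_zero, hp0]; exact ⟨le_rfl, PathLe.refl _ _⟩
      | succ i ih =>
        rw [show t₀ + (i + 1) = (t₀ + i) + 1 by omega, hstep (t₀ + i)]
        by_cases hmi : μ (t₀ + i) = true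
        · simp only [hmi, if_true]; exact hRbπ _ ih
        · simp only [hmi, if_false]; exact hRbσ _ ih
    obtain ⟨mm, hodd, hfr, hmax⟩ := hpar
    have hup : mm ≤ c p := by
      obtain ⟨n, hn1, hn2⟩ := Filter.frequently_atTop.mp hfr t₀
      rw [← hm] at hn2
      have := (hRbev (n - t₀)).1
      rw [show t₀ + (n - t₀) = n by omega] at this
      omega
    have hlow : c p ≤ mm := by
      apply hmax
      apply Filter.frequently_atTop.mpr
      intro N
      obtain ⟨n, hn1, hn2⟩ := hfreqp N
      exact ⟨n, hn1, by rw [← hm, hn2]⟩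
    have : mm = c p := by omega
    rw [this] at hodd
    exact (Nat.not_odd_iff_even.mpr hpe) hodd
  · -- finitely many accs → ParityAccept
    intro hfin
    obtain ⟨B, hB⟩ := hfin.bddAbove
    have hyJ : ∀ k, B + 1 ≤ k → y k ≠ true := by
      intro k hk hyk
      have := hB (show k ∈ {j | y j = true} from hyk)
      omega
    -- find T ≥ B+1 with mode false from T on
    have hT : ∃ T, B + 1 ≤ T ∧ μ T = false := by
      by_cases hμJ : μ (B + 1) = false
      · exact ⟨B + 1, le_rfl, hμJ⟩
      · have hμJ' : μ (B + 1) = true := by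
          cases h : μ (B + 1)
          · exact absurd h hμJ
          · rfl
        obtain ⟨t, ht1, ht2⟩ := P1 (B + 1) hμJ'
        refine ⟨t + 1, by omega, ?_⟩
        rw [hμ t]
        have : y (t + 1) = false := by
          have := hyJ (t + 1) (by omega)
          simp at this
          exact this
        simp [this, ht2]
    obtain ⟨T, hT1, hT2⟩ := hT
    have hfalse : ∀ k, T ≤ k → μ k = false :=
      P2 T (fun k hk => hyJ k (by omega)) hT2
    -- visits to r are frequent
    have hfreqr : ∀ N, ∃ n, N ≤ n ∧ m n = r := by
      intro N
      set T₀ := max T N with hT₀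
      have hfalse' : ∀ k, T₀ ≤ k → μ k = false := fun k hk =>
        hfalse k (le_trans (le_max_left T N) hk)
      obtain ⟨K, hK⟩ := gg_reach (ℓt := ℓr) ⟨maxC M c, hV T₀⟩
      refine ⟨T₀ + K, by omega, ?_⟩
      rw [P3 T₀ hfalse' K, hK]
    obtain ⟨t₁, ht₁T, ht₁r⟩ := hfreqr T
    have hRaev : ∀ i, c (m (t₁ + i)) ≤ c r ∧ PathLe M c (c r) (m (t₁ + i)) r := by
      intro i
      induction i with
      | zero => rw [Nat.add_zero, ht₁r]; exact ⟨le_rfl, PathLe.refl _ _⟩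
      | succ i ih =>
        rw [show t₁ + (i + 1) = (t₁ + i) + 1 by omega, hstep (t₁ + i)]
        have : μ (t₁ + i) = false := hfalse (t₁ + i) (by omega)
        simp only [this, Bool.false_eq_true, if_false]
        exact hRa _ ih
    refine ⟨c r, hro, ?_, ?_⟩
    · apply Filter.frequently_atTop.mpr
      intro N
      obtain ⟨n, hn1, hn2⟩ := hfreqr N
      exact ⟨n, hn1, by rw [← hm, hn2]⟩
    · intro m' hm'
      obtain ⟨n, hn1, hn2⟩ := Filter.frequently_atTop.mp hm' t₁
      rw [← hm] at hn2
      have := (hRaev (n - t₁)).1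
      rw [show t₁ + (n - t₁) = n by omega] at this
      omega


end Stmt2
namespace Stmt2

attribute [local instance] Classical.propDecidable

set_option linter.unusedSectionVars false

variable {Sig : Type} [Fintype Sig] {M : DetAuto Sig} {c : M.Q → ℕ}

lemma refuter_ok (hb : Bad M c) :
    ∃ R : Transducer Bool Sig, Fintype.card R.S ≤ 2 * Fintype.card M.Q ∧
      ∀ y, ParityAccept M c (R.out y) ↔ {j | y j = true}.Finite := by
  obtain ⟨r, p, ℓr, ℓp, x₀, nr, hreach, hro, hpe, hrp, h1, h2, h3, h4, h5, h6⟩ := hb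
  have hinit : PathLe M c (maxC M c) M.init r := by
    have := run_stepsLe (M := M) (c := c) x₀ (maxC M c) nr 0 (fun k _ _ => le_maxC _)
    rw [Nat.zero_add] at this
    rw [hreach] at this
    exact ⟨nr, this⟩
  set pol : Bool → M.Q → Sig :=
    fun md s => if md = true then tw M c p ℓp s else tw M c r ℓr s with hpol
  have hcard : Fintype.card (M.Q × Bool) = 2 * Fintype.card M.Q := by
    rw [Fintype.card_prod, Fintype.card_bool, Nat.mul_comm]
  by_cases hE : ∃ zm : M.Q × Bool, M.δ zm.1 (pol zm.2 zm.1) = M.init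
  · obtain ⟨⟨z, md0⟩, hz⟩ := hE
    set R : Transducer Bool Sig :=
      { S := M.Q × Bool
        init := (z, md0)
        ρ := fun s b => (M.δ s.1 (pol s.2 s.1),
          if b = true then true else if s.1 = p then false else s.2)
        τ := fun s => pol s.2 s.1 } with hR
    refine ⟨R, hcard.le, ?_⟩
    intro y
    set x : ℕ → Sig := R.out y with hxdef
    set μ : ℕ → Bool := fun j => (R.run y (j + 1)).2 with hμdef
    have hout : ∀ j, x j = pol (R.run y (j + 1)).2 (R.run y (j + 1)).1 := fun j => rfl
    have hrunsucc : ∀ j, R.run y (j + 1) = R.ρ (R.run y j) (y j) := fun j => rfl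
    have inv : ∀ j, (R.run y (j + 1)).1 = M.run x j := by
      intro j
      induction j with
      | zero =>
        rw [hrunsucc 0]
        show M.δ z (pol md0 z) = M.run x 0
        exact hz
      | succ j ih =>
        rw [hrunsucc (j + 1)]
        show M.δ (R.run y (j + 1)).1 (pol (R.run y (j + 1)).2 (R.run y (j + 1)).1)
          = M.run x (j + 1)
        rw [← hout j, ih, run_succ]
    have hx : ∀ j, x j = if μ j = true then tw M c p ℓp (M.run x j)
        else tw M c r ℓr (M.run x j) := by
      intro j
      rw [hout j, inv j]
    have hμ : ∀ j, μ (j + 1) = if y (j + 1) = true then true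
        else if M.run x j = p then false else μ j := by
      intro j
      show (R.run y (j + 2)).2 = _
      rw [hrunsucc (j + 1)]
      show (if y (j + 1) = true then true else if (R.run y (j + 1)).1 = p then false
        else (R.run y (j + 1)).2) = _
      rw [inv j]
    exact main_run r p ℓr ℓp hro hpe hrp h1 h2 h3 h4 h5 h6 hinit x μ y hx hμ
  · push_neg at hE
    set R : Transducer Bool Sig :=
      { S := M.Q × Bool
        init := (M.init, true)
        ρ := fun s b => if s.2 = true ∧ s.1 = M.init then (M.init, false)
          else (M.δ s.1 (pol s.2 s.1),
            if b = true then true else if s.1 = p then false else s.2)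
        τ := fun s => pol s.2 s.1 } with hR
    refine ⟨R, hcard.le, ?_⟩
    intro y
    set x : ℕ → Sig := R.out y with hxdef
    set μ : ℕ → Bool := fun j => (R.run y (j + 1)).2 with hμdef
    have hout : ∀ j, x j = pol (R.run y (j + 1)).2 (R.run y (j + 1)).1 := fun j => rfl
    have hrunsucc : ∀ j, R.run y (j + 1) = R.ρ (R.run y j) (y j) := fun j => rfl
    have inv : ∀ j, (R.run y (j + 1)).1 = M.run x j ∧
        ¬((R.run y (j + 1)).2 = true ∧ (R.run y (j + 1)).1 = M.init) := by
      intro j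
      induction j with
      | zero =>
        have h0 : R.run y 1 = ((M.init, false) : M.Q × Bool) := by
          rw [hrunsucc 0]
          show (if (true : Bool) = true ∧ M.init = M.init then ((M.init, false) : M.Q × Bool)
            else _) = _
          rw [if_pos ⟨rfl, rfl⟩]
        rw [h0]
        exact ⟨rfl, by simp⟩
      | succ j ih =>
        obtain ⟨ih1, ih2⟩ := ih
        have hnorm : R.run y (j + 2) = (M.δ (R.run y (j + 1)).1
            (pol (R.run y (j + 1)).2 (R.run y (j + 1)).1),
            if y (j + 1) = true then true else if (R.run y (j + 1)).1 = p then false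
              else (R.run y (j + 1)).2) := by
          rw [hrunsucc (j + 1)]
          show (if _ then _ else _) = _
          rw [if_neg ih2]
        constructor
        · rw [hnorm]
          show M.δ (R.run y (j + 1)).1 (pol (R.run y (j + 1)).2 (R.run y (j + 1)).1)
            = M.run x (j + 1)
          rw [← hout j, ih1, run_succ]
        · rw [hnorm]
          rintro ⟨-, hbad⟩
          exact hE ((R.run y (j + 1)).1, (R.run y (j + 1)).2) hbad
    have hx : ∀ j, x j = if μ j = true then tw M c p ℓp (M.run x j)
        else tw M c r ℓr (M.run x j) := by
      intro j
      rw [hout j, (inv j).1]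
    have hμ : ∀ j, μ (j + 1) = if y (j + 1) = true then true
        else if M.run x j = p then false else μ j := by
      intro j
      show (R.run y (j + 2)).2 = _
      rw [hrunsucc (j + 1)]
      show (if (R.run y (j + 1)).2 = true ∧ (R.run y (j + 1)).1 = M.init then
        ((M.init, false) : M.Q × Bool) else _).2 = _
      rw [if_neg (inv j).2]
      show (if y (j + 1) = true then true else if (R.run y (j + 1)).1 = p then false
        else (R.run y (j + 1)).2) = _
      rw [(inv j).1]
    exact main_run r p ℓr ℓp hro hpe hrp h1 h2 h3 h4 h5 h6 hinit x μ y hx hμ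

end Stmt2
/-- For a DPW with `n` states recognizing `L`: either a DBW with at most `n` states
recognizes `L`, or there is a DBW-refuter for `L` with at most `2n` states. -/
theorem stmt_2 {Sig : Type} [Fintype Sig] (M : DetAuto Sig) (c : M.Q → ℕ) (n : ℕ)
    (hn : Fintype.card M.Q = n)
    (L : Set (ℕ → Sig)) (hL : ∀ x, x ∈ L ↔ ParityAccept M c x) :
    (∃ (B : DetAuto Sig) (acc : Set B.Q), Fintype.card B.Q ≤ n ∧
        ∀ x, x ∈ L ↔ ∃ᶠ m in Filter.atTop, B.run x m ∈ acc) ∨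
    (∃ R : Transducer Bool Sig, Fintype.card R.S ≤ 2 * n ∧ DBWRefuter L R) := by
  by_cases hb : Stmt2.Bad M c
  · right
    obtain ⟨R, hcard, hiff⟩ := Stmt2.refuter_ok hb
    refine ⟨R, by rw [← hn]; exact hcard, ?_⟩
    intro y
    exact (hL _).trans (hiff y)
  · left
    let B : DetAuto Sig := { Q := M.Q, fin := M.fin, init := M.init, δ := M.δ }
    have hrun : ∀ x k, B.run x k = M.run x k := by
      intro x k
      induction k with
      | zero => rfl
      | succ k ih =>
        show B.δ (B.run x k) (x k) = M.δ (M.run x k) (x k)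
        rw [ih]
    refine ⟨B, Stmt2.alphaSet M c, ?_, ?_⟩
    · exact le_of_eq hn
    · intro x
      refine (hL x).trans ((Stmt2.dbw_ok hb x).trans ?_)
      have : (fun m => M.run x m ∈ Stmt2.alphaSet M c) =
          fun m => B.run x m ∈ Stmt2.alphaSet M c := by
        funext m
        rw [hrun]
      constructor
      · intro h
        exact h.mono (fun m hm => by rw [hrun]; exact hm)
      · intro h
        exact h.mono (fun m hm => by rw [← hrun x m]; exact hm)
end

section
/- An ω-regular language L ⊆ Σ^ω is not DBW-recognizable if and only if there exist finite words x ∈ Σ* and x₁, x₂ ∈ Σ⁺ such that x·(x₁+x₂)*·x₁^ω ⊆ L and x·(x₁*·x₂)^ω ∩ L = ∅. -/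
/-- `u` is a prefix of the infinite word `w`. -/
def HasPrefixWord {α : Type} (w : ℕ → α) (u : List α) : Prop :=
  ∀ i : Fin u.length, w i.1 = u.get i

/-- The ω-language `x·(x₁+x₂)*·x₁^ω`. -/
def LangA {α : Type} (x x₁ x₂ : List α) : Set (ℕ → α) :=
  { w | ∃ ws : List (List α), (∀ u ∈ ws, u = x₁ ∨ u = x₂) ∧
        ∀ n, HasPrefixWord w (x ++ ws.flatten ++ (List.replicate n x₁).flatten) }

/-- The ω-language `x·(x₁*·x₂)^ω`. -/
def LangB {α : Type} (x x₁ x₂ : List α) : Set (ℕ → α) :=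
  { w | ∃ j : ℕ → ℕ, ∀ n, HasPrefixWord w
        (x ++ ((List.range n).map (fun i => (List.replicate (j i) x₁).flatten ++ x₂)).flatten) }

namespace Stmt5
variable {α : Type}

/-- Extended transition function. -/
def δs (M : DetAuto α) (q : M.Q) (l : List α) : M.Q := l.foldl M.δ q

@[simp] lemma δs_nil (M : DetAuto α) (q : M.Q) : δs M q [] = q := rfl

lemma δs_append (M : DetAuto α) (q : M.Q) (l₁ l₂ : List α) :
    δs M q (l₁ ++ l₂) = δs M (δs M q l₁) l₂ := List.foldl_append ..

lemma δs_concat (M : DetAuto α) (q : M.Q) (l : List α) (a : α) :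
    δs M q (l ++ [a]) = M.δ (δs M q l) a := by
  rw [δs_append]; rfl

/-- The word read between positions `a` and `a + k`. -/
def seg (w : ℕ → α) (a : ℕ) : ℕ → List α
  | 0 => []
  | k + 1 => seg w a k ++ [w (a + k)]

@[simp] lemma seg_length (w : ℕ → α) (a k : ℕ) : (seg w a k).length = k := by
  induction k with
  | zero => rfl
  | succ k ih => simp [seg, ih]

lemma δs_run (M : DetAuto α) (w : ℕ → α) (a k : ℕ) :
    δs M (M.run w a) (seg w a k) = M.run w (a + k) := by
  induction k with
  | zero => rfl
  | succ k ih => rw [seg, δs_concat, ih]; rfl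

lemma seg_take (w : ℕ → α) (a : ℕ) {i k : ℕ} (h : i ≤ k) :
    (seg w a k).take i = seg w a i := by
  induction k with
  | zero => simp at h; subst h; rfl
  | succ k ih =>
    rcases Nat.lt_or_ge i (k+1) with h' | h'
    · rw [seg, List.take_append_of_le_length (by simp [Nat.lt_succ_iff.mp h']),
        ih (Nat.lt_succ_iff.mp h')]
    · have : i = k + 1 := le_antisymm h h'
      subst this
      exact List.take_of_length_le (by simp)

lemma run_eq_of_prefix (M : DetAuto α) {w : ℕ → α} {u : List α}
    (h : HasPrefixWord w u) : ∀ i, i ≤ u.length → M.run w i = δs M M.init (u.take i) := by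
  intro i hi
  induction i with
  | zero => rfl
  | succ i ih =>
    have hi' : i < u.length := hi
    rw [List.take_succ, List.getElem?_eq_getElem hi', Option.toList_some, δs_concat]
    show M.δ (M.run w i) (w i) = _
    rw [ih (le_of_lt hi'), h ⟨i, hi'⟩, List.get_eq_getElem]

/-- Prefixes transfer along list prefixes. -/
lemma hasPrefixWord_of_prefix {w : ℕ → α} {u v : List α}
    (h : HasPrefixWord w u) (hp : v <+: u) : HasPrefixWord w v := by
  intro ⟨i, hi⟩
  have hi' : i < u.length := lt_of_lt_of_le hi hp.length_le
  have := h ⟨i, hi'⟩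
  simp only [List.get_eq_getElem] at this ⊢
  rw [this, hp.getElem hi]

/-- Maximal color seen while reading `l` from `q` (over the states entered). -/
def mxc (M : DetAuto α) (c : M.Q → ℕ) (q : M.Q) (l : List α) : ℕ :=
  (Finset.range l.length).sup (fun i => c (δs M q (l.take (i + 1))))

lemma le_mxc (M : DetAuto α) (c : M.Q → ℕ) (q : M.Q) (l : List α) {i : ℕ}
    (hi : i < l.length) : c (δs M q (l.take (i + 1))) ≤ mxc M c q l :=
  Finset.le_sup (f := fun i => c (δs M q (l.take (i + 1)))) (Finset.mem_range.mpr hi)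

lemma self_le_mxc (M : DetAuto α) (c : M.Q → ℕ) (q : M.Q) {l : List α} (hl : l ≠ []) :
    c (δs M q l) ≤ mxc M c q l := by
  have hlen : 0 < l.length := List.length_pos_iff.mpr hl
  have := le_mxc M c q l (i := l.length - 1) (by omega)
  rwa [Nat.sub_add_cancel hlen, List.take_length] at this

lemma exists_mxc (M : DetAuto α) (c : M.Q → ℕ) (q : M.Q) {l : List α} (hl : l ≠ []) :
    ∃ i < l.length, mxc M c q l = c (δs M q (l.take (i + 1))) := by
  obtain ⟨i, hi, h⟩ := Finset.exists_mem_eq_sup (Finset.range l.length)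
    (by simpa using hl) (fun i => c (δs M q (l.take (i + 1))))
  exact ⟨i, Finset.mem_range.mp hi, h⟩

lemma mxc_le (M : DetAuto α) (c : M.Q → ℕ) (q : M.Q) (l : List α) {m : ℕ}
    (h : ∀ i < l.length, c (δs M q (l.take (i + 1))) ≤ m) : mxc M c q l ≤ m :=
  Finset.sup_le fun i hi => h i (Finset.mem_range.mp hi)

/-- If eventually colors are `≤ m` and `m` occurs infinitely often, acceptance ⟺ `Odd m`. -/
lemma parity_iff_dominant (M : DetAuto α) (c : M.Q → ℕ) (w : ℕ → α) (m N : ℕ)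
    (hdom : ∀ n, N ≤ n → c (M.run w n) ≤ m)
    (hfr : ∃ᶠ n in Filter.atTop, c (M.run w n) = m) :
    (ParityAccept M c w ↔ Odd m) := by
  constructor
  · rintro ⟨m', hodd, hfr', hmax⟩
    have h1 : m ≤ m' := hmax m hfr
    have h2 : m' ≤ m := by
      obtain ⟨n, hn, he⟩ := Filter.frequently_atTop.mp hfr' N
      rw [← he]; exact hdom n hn
    rwa [← le_antisymm h1 h2] at hodd
  · intro hodd
    refine ⟨m, hodd, hfr, fun m' hfr' => ?_⟩
    obtain ⟨n, hn, he⟩ := Filter.frequently_atTop.mp hfr' N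
    rw [← he]; exact hdom n hn

end Stmt5
namespace Stmt5
variable {α : Type}

/-- `u^k` as a flat list. -/
def fr (u : List α) (k : ℕ) : List α := (List.replicate k u).flatten

@[simp] lemma fr_zero (u : List α) : fr u 0 = [] := rfl

lemma fr_succ (u : List α) (k : ℕ) : fr u (k + 1) = u ++ fr u k := by
  simp [fr, List.replicate_succ]

lemma fr_add (u : List α) (k l : ℕ) : fr u (k + l) = fr u k ++ fr u l := by
  unfold fr; rw [List.replicate_add, List.flatten_append]

lemma fr_one (u : List α) : fr u 1 = u := by
  unfold fr; rw [List.replicate_succ]; simp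

lemma fr_succ' (u : List α) (k : ℕ) : fr u (k + 1) = fr u k ++ u := by
  rw [fr_add u k 1, fr_one]

@[simp] lemma fr_length (u : List α) (k : ℕ) : (fr u k).length = k * u.length := by
  induction k with
  | zero => simp
  | succ k ih => rw [fr_succ]; simp [ih, Nat.succ_mul]; omega

lemma δs_fr (M : DetAuto α) {q : M.Q} {u : List α} (h : δs M q u = q) (k : ℕ) :
    δs M q (fr u k) = q := by
  induction k with
  | zero => rfl
  | succ k ih => rw [fr_succ, δs_append, h, ih]

lemma fr_take (u : List α) {K k t : ℕ} (ht1 : 1 ≤ t) (ht2 : t ≤ u.length)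
    (hK : k * u.length + t ≤ K * u.length) :
    (fr u K).take (k * u.length + t) = fr u k ++ u.take t := by
  have hkK : k < K := by
    by_contra h
    push_neg at h
    have := Nat.mul_le_mul_right u.length h
    omega
  have h1 : fr u K = fr u k ++ fr u (K - k) := by
    rw [← fr_add]; congr 1; omega
  have h2 : fr u (K - k) = u ++ fr u (K - k - 1) := by
    rw [← fr_succ]; congr 1; omega
  rw [h1, show k * u.length + t = (fr u k).length + t by simp [Nat.mul_comm],
    List.take_length_add_append, h2, List.take_append_of_le_length ht2]

/-- Limit word of a chain of lists. -/
def limitW (d : α) (Y : ℕ → List α) : ℕ → α := fun n => (Y (n + 1)).getD n d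

lemma chain_prefix {Y : ℕ → List α} (hc : ∀ n, Y n <+: Y (n + 1)) :
    ∀ {a b : ℕ}, a ≤ b → Y a <+: Y b := by
  intro a b hab
  induction b with
  | zero => simp at hab; subst hab; exact List.prefix_refl _
  | succ b ih =>
    rcases Nat.lt_or_ge a (b + 1) with h | h
    · exact (ih (Nat.lt_succ_iff.mp h)).trans (hc b)
    · have : a = b + 1 := le_antisymm hab h
      subst this; exact List.prefix_refl _

lemma limitW_prefix (d : α) (Y : ℕ → List α) (hc : ∀ n, Y n <+: Y (n + 1))
    (hlen : ∀ n, n ≤ (Y n).length) : ∀ m, HasPrefixWord (limitW d Y) (Y m) := by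
  intro m ⟨i, hi⟩
  have hi1 : i < (Y (i + 1)).length := lt_of_lt_of_le (Nat.lt_succ_self i) (hlen (i + 1))
  show (Y (i + 1)).getD i d = _
  rw [List.getD_eq_getElem _ _ hi1, List.get_eq_getElem]
  rcases Nat.le_total (i + 1) m with h | h
  · exact (chain_prefix hc h).getElem hi1
  · exact ((chain_prefix hc h).getElem hi).symm

/-- Pigeonhole: a frequently-occurring value of a function into a finite type,
within a frequently-occurring predicate. -/
lemma exists_frequent_of_frequently {β : Type} [Fintype β] (f : ℕ → β) (P : β → Prop)
    (h : ∃ᶠ n in Filter.atTop, P (f n)) :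
    ∃ b, P b ∧ ∃ᶠ n in Filter.atTop, f n = b := by
  by_contra hcon
  push_neg at hcon
  have hev : ∀ᶠ n in Filter.atTop, ∀ b, P b → f n ≠ b := by
    rw [Filter.eventually_all]
    intro b
    by_cases hb : P b
    · have := hcon b hb
      filter_upwards [this] with n hn _
      exact hn
    · filter_upwards with n hPb; exact absurd hPb hb
  obtain ⟨n, hPn, hne⟩ := (h.and_eventually hev).exists
  exact hne (f n) hPn rfl

lemma exists_frequent {β : Type} [Fintype β] [Nonempty β] (f : ℕ → β) :
    ∃ b, ∃ᶠ n in Filter.atTop, f n = b := by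
  have h : ∀ᶠ _ in (Filter.atTop : Filter ℕ), True := Filter.Eventually.of_forall fun _ => trivial
  obtain ⟨b, _, hb⟩ := exists_frequent_of_frequently f (fun _ => True) h.frequently
  exact ⟨b, hb⟩

end Stmt5
namespace Stmt5
variable {α : Type}

/-- The bad pattern in a deterministic parity automaton. -/
def Pat (M : DetAuto α) (c : M.Q → ℕ) : Prop :=
  ∃ x u v : List α, u ≠ [] ∧ v ≠ [] ∧
    δs M (δs M M.init x) u = δs M M.init x ∧ δs M (δs M M.init x) v = δs M M.init x ∧
    Odd (mxc M c (δs M M.init x) u) ∧ Even (mxc M c (δs M M.init x) v) ∧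
    mxc M c (δs M M.init x) u < mxc M c (δs M M.init x) v

lemma δs_flatten_loop (M : DetAuto α) {q : M.Q} {u v : List α} {ws : List (List α)}
    (hws : ∀ b ∈ ws, b = u ∨ b = v) (hu : δs M q u = q) (hv : δs M q v = q) :
    δs M q ws.flatten = q := by
  induction ws with
  | nil => rfl
  | cons b ws ih =>
    rw [List.flatten_cons, δs_append]
    rcases hws b List.mem_cons_self with h | h <;> rw [h]
    · rw [hu]; exact ih fun b hb => hws b (List.mem_cons_of_mem _ hb)
    · rw [hv]; exact ih fun b hb => hws b (List.mem_cons_of_mem _ hb)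

lemma langA_run (M : DetAuto α) {x u v : List α} {w : ℕ → α} {ws : List (List α)}
    (hws : ∀ b ∈ ws, b = u ∨ b = v)
    (hu : δs M (δs M M.init x) u = δs M M.init x)
    (hv : δs M (δs M M.init x) v = δs M M.init x)
    (hpre : ∀ n, HasPrefixWord w (x ++ ws.flatten ++ fr u n)) (k i : ℕ) (hi : i ≤ u.length) :
    M.run w ((x ++ ws.flatten).length + (k * u.length + i))
      = δs M (δs M M.init x) (u.take i) := by
  have hflat : δs M M.init (x ++ ws.flatten) = δs M M.init x := by
    rw [δs_append]; exact δs_flatten_loop M hws hu hv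
  have hlen : (x ++ ws.flatten).length + (k * u.length + i)
      ≤ (x ++ ws.flatten ++ fr u (k + 1)).length := by
    simp [Nat.succ_mul]; omega
  rw [run_eq_of_prefix M (hpre (k + 1)) _ hlen, List.take_length_add_append]
  have h2 : (fr u (k + 1)).take (k * u.length + i) = fr u k ++ u.take i := by
    rw [fr_succ', show k * u.length + i = (fr u k).length + i by simp, List.take_length_add_append]
  rw [h2, δs_append, hflat, δs_append, δs_fr M hu]

/-- Words in `LangA` are parity-accepted iff the `u`-loop max color is odd. -/
lemma langA_parity (M : DetAuto α) (c : M.Q → ℕ) {x u v : List α} {w : ℕ → α}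
    (hune : u ≠ [])
    (hu : δs M (δs M M.init x) u = δs M M.init x)
    (hv : δs M (δs M M.init x) v = δs M M.init x)
    (hw : w ∈ LangA x u v) :
    (ParityAccept M c w ↔ Odd (mxc M c (δs M M.init x) u)) := by
  obtain ⟨ws, hws, hpre⟩ := hw
  have hpre' : ∀ n, HasPrefixWord w (x ++ ws.flatten ++ fr u n) := hpre
  set q := δs M M.init x with hq
  have hppos : 0 < u.length := List.length_pos_iff.mpr hune
  set a := (x ++ ws.flatten).length with ha
  apply parity_iff_dominant M c w (mxc M c q u) (a + 1)
  · intro n hn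
    have hs1 : 1 ≤ n - a := by omega
    have hdm : (n - a - 1) / u.length * u.length + (n - a - 1) % u.length = n - a - 1 :=
      Nat.div_add_mod' (n - a - 1) u.length
    have hmod : (n - a - 1) % u.length < u.length := Nat.mod_lt _ hppos
    have hn' : n = a + ((n - a - 1) / u.length * u.length + ((n - a - 1) % u.length + 1)) := by
      omega
    rw [hn', langA_run M hws hu hv hpre' _ _ (by omega)]
    exact le_mxc M c q u (by omega)
  · rw [Filter.frequently_atTop]
    intro N
    obtain ⟨i₀, hi₀, hval⟩ := exists_mxc M c q hune
    refine ⟨a + (N * u.length + (i₀ + 1)), by nlinarith, ?_⟩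
    rw [langA_run M hws hu hv hpre' _ _ (by omega), ← hval]

lemma langB_parity (M : DetAuto α) (c : M.Q → ℕ) {x u v : List α} {w : ℕ → α}
    (hune : u ≠ []) (hvne : v ≠ [])
    (hu : δs M (δs M M.init x) u = δs M M.init x)
    (hv : δs M (δs M M.init x) v = δs M M.init x)
    (hoe : mxc M c (δs M M.init x) u < mxc M c (δs M M.init x) v)
    (hw : w ∈ LangB x u v) :
    (ParityAccept M c w ↔ Odd (mxc M c (δs M M.init x) v)) := by
  obtain ⟨j, hpre⟩ := hw
  set q := δs M M.init x with hq
  have hppos : 0 < u.length := List.length_pos_iff.mpr hune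
  have hspos : 0 < v.length := List.length_pos_iff.mpr hvne
  set B : ℕ → List α :=
    fun n => x ++ ((List.range n).map (fun i => fr u (j i) ++ v)).flatten with hB
  have hpre' : ∀ n, HasPrefixWord w (B n) := hpre
  have hBsucc : ∀ n, B (n + 1) = B n ++ (fr u (j n) ++ v) := by
    intro n
    simp only [hB, List.range_succ, List.map_append, List.map_cons, List.map_nil,
      List.flatten_append, List.flatten_cons, List.flatten_nil, List.append_nil,
      List.append_assoc]
  have hqB : ∀ n, δs M M.init (B n) = q := by
    intro n
    induction n with
    | zero => simp [hB, hq]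
    | succ n ih =>
      rw [hBsucc n, δs_append, ih, δs_append, δs_fr M hu, hv]
  have hblen : ∀ n, (B (n + 1)).length = (B n).length + (j n * u.length + v.length) := by
    intro n; rw [hBsucc n]; simp [Nat.mul_comm]
  -- run inside block n
  have hrun : ∀ n i, i ≤ j n * u.length + v.length →
      M.run w ((B n).length + i) = δs M q ((fr u (j n) ++ v).take i) := by
    intro n i hi
    have hlen : (B n).length + i ≤ (B (n + 1)).length := by rw [hblen n]; omega
    rw [run_eq_of_prefix M (hpre' (n + 1)) _ hlen, hBsucc n, List.take_length_add_append, δs_append, hqB n]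
  -- color bound inside a block
  have hcol : ∀ n i, 1 ≤ i → i ≤ j n * u.length + v.length →
      c (δs M q ((fr u (j n) ++ v).take i)) ≤ mxc M c q v := by
    intro n i h1 h2
    rcases le_or_gt i (j n * u.length) with hc | hc
    · have ht : (fr u (j n) ++ v).take i = (fr u (j n)).take i :=
        List.take_append_of_le_length (by simp [Nat.mul_comm]; omega)
      have hdm : (i - 1) / u.length * u.length + (i - 1) % u.length = i - 1 :=
        Nat.div_add_mod' (i - 1) u.length
      have hmod : (i - 1) % u.length < u.length := Nat.mod_lt _ hppos
      have hi' : i = (i - 1) / u.length * u.length + ((i - 1) % u.length + 1) := by omega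
      rw [ht, hi', fr_take u (by omega) (by omega) (by omega),
        δs_append, δs_fr M hu]
      exact le_trans (le_mxc M c q u (by omega)) (le_of_lt hoe)
    · have ht : (fr u (j n) ++ v).take i = fr u (j n) ++ v.take (i - j n * u.length) := by
        rw [show i = (fr u (j n)).length + (i - j n * u.length) by simp [Nat.mul_comm]; omega,
          List.take_length_add_append]
        congr 1; simp [Nat.mul_comm]
      rw [ht, show i - j n * u.length = (i - j n * u.length - 1) + 1 by omega,
        δs_append, δs_fr M hu]
      exact le_mxc M c q v (by omega)
  have hb0 : (B 0).length = x.length := by simp [hB]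
  have hbk : ∀ k, k ≤ (B k).length := by
    intro k
    induction k with
    | zero => omega
    | succ k ih => rw [hblen k]; omega
  apply parity_iff_dominant M c w (mxc M c q v) (x.length + 1)
  · intro n hn
    -- locate the block containing position n
    have hPn : n ≤ (B n).length := hbk n
    have hex : ∃ m, n ≤ (B m).length := ⟨n, hPn⟩
    set m := Nat.find hex with hm
    have hspec : n ≤ (B m).length := Nat.find_spec hex
    have hm0 : m ≠ 0 := by
      intro h0
      rw [h0, hb0] at hspec; omega
    have hlt : (B (m - 1)).length < n := by
      have := Nat.find_min hex (m := m - 1) (by omega)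
      omega
    set k := m - 1 with hk
    have hble : n ≤ (B (k + 1)).length := by rwa [show k + 1 = m by omega]
    have hble' : n - (B k).length ≤ j k * u.length + v.length := by
      have := hblen k; omega
    have hrw : n = (B k).length + (n - (B k).length) := by omega
    rw [hrw, hrun k _ hble']
    exact hcol k _ (by omega) hble'
  · rw [Filter.frequently_atTop]
    intro N
    obtain ⟨t₀, ht₀, hval⟩ := exists_mxc M c q hvne
    refine ⟨(B N).length + (j N * u.length + (t₀ + 1)), by have := hbk N; omega, ?_⟩
    rw [hrun N _ (by omega)]
    have ht : (fr u (j N) ++ v).take (j N * u.length + (t₀ + 1)) = fr u (j N) ++ v.take (t₀ + 1) := by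
      rw [show j N * u.length + (t₀ + 1) = (fr u (j N)).length + (t₀ + 1) by simp [Nat.mul_comm],
        List.take_length_add_append]
    rw [ht, δs_append, δs_fr M hu, ← hval]

/-- The pattern yields the witness languages. -/
lemma pat_implies_rhs {L : Set (ℕ → α)} (M : DetAuto α) (c : M.Q → ℕ)
    (hMc : ∀ x, x ∈ L ↔ ParityAccept M c x) (hP : Pat M c) :
    ∃ x x₁ x₂ : List α, x₁ ≠ [] ∧ x₂ ≠ [] ∧
      LangA x x₁ x₂ ⊆ L ∧ LangB x x₁ x₂ ∩ L = ∅ := by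
  obtain ⟨x, u, v, hune, hvne, hu, hv, hodd, heven, hoe⟩ := hP
  refine ⟨x, u, v, hune, hvne, ?_, ?_⟩
  · intro w hw
    rw [hMc w, langA_parity M c hune hu hv hw]
    exact hodd
  · rw [Set.eq_empty_iff_forall_notMem]
    rintro w ⟨hwB, hwL⟩
    rw [hMc w, langB_parity M c hune hvne hu hv hoe hwB] at hwL
    exact (Nat.not_odd_iff_even.mpr heven) hwL

end Stmt5
namespace Stmt5
variable {α : Type}

/-- Extract a loop at a frequently-visited state realizing the dominant color `m`. -/
lemma exists_loop (M : DetAuto α) (c : M.Q → ℕ) (w : ℕ → α) (q : M.Q) (m N₀ : ℕ)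
    (hd : ∀ n, N₀ ≤ n → c (M.run w n) ≤ m)
    (hq : ∃ᶠ n in Filter.atTop, M.run w n = q)
    (hm : ∃ᶠ n in Filter.atTop, c (M.run w n) = m) :
    ∃ u : List α, u ≠ [] ∧ δs M q u = q ∧ mxc M c q u = m := by
  obtain ⟨n₁, hn₁N, hrn₁⟩ := Filter.frequently_atTop.mp hq N₀
  obtain ⟨n₃, hn₃, hcn₃⟩ := Filter.frequently_atTop.mp hm (n₁ + 1)
  obtain ⟨n₂, hn₂, hrn₂⟩ := Filter.frequently_atTop.mp hq n₃
  have hseg : ∀ k, δs M q (seg w n₁ k) = M.run w (n₁ + k) := by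
    intro k; rw [← hrn₁]; exact δs_run M w n₁ k
  refine ⟨seg w n₁ (n₂ - n₁), ?_, ?_, ?_⟩
  · intro h
    have := congrArg List.length h
    simp only [seg_length, List.length_nil] at this
    omega
  · rw [hseg (n₂ - n₁), show n₁ + (n₂ - n₁) = n₂ by omega]; exact hrn₂
  · apply le_antisymm
    · apply mxc_le
      intro i hi
      rw [seg_length] at hi
      rw [seg_take w n₁ (by omega), hseg (i + 1)]
      exact hd _ (by omega)
    · have hi : n₃ - n₁ - 1 < (seg w n₁ (n₂ - n₁)).length := by rw [seg_length]; omega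
      have h1 : (seg w n₁ (n₂ - n₁)).take ((n₃ - n₁ - 1) + 1) = seg w n₁ (n₃ - n₁) := by
        rw [seg_take w n₁ (by omega)]
        congr 1
        omega
      calc m = c (δs M q ((seg w n₁ (n₂ - n₁)).take ((n₃ - n₁ - 1) + 1))) := by
              rw [h1, hseg (n₃ - n₁), show n₁ + (n₃ - n₁) = n₃ by omega, hcn₃]
        _ ≤ _ := le_mxc M c q _ hi

/-- Without the pattern, the parity automaton's language is DBW-recognizable. -/
lemma no_pat_dbw {L : Set (ℕ → α)} (M : DetAuto α) (c : M.Q → ℕ)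
    (hMc : ∀ x, x ∈ L ↔ ParityAccept M c x) (hP : ¬ Pat M c) : DBWRecognizable L := by
  classical
  refine ⟨M, { q | ∀ y : List α, y ≠ [] → δs M q y = q → Odd (mxc M c q y) }, fun w => ?_⟩
  haveI : Nonempty M.Q := ⟨M.init⟩
  set r := M.run w with hr
  set Fr : Finset M.Q := Finset.univ.filter (fun q => ∃ᶠ n in Filter.atTop, r n = q) with hFr
  have hFrne : Fr.Nonempty := by
    obtain ⟨q, hq⟩ := exists_frequent r
    exact ⟨q, by simp [hFr, hq]⟩
  obtain ⟨q₁, hq₁Fr, hq₁⟩ := Finset.exists_mem_eq_sup Fr hFrne c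
  set m := Fr.sup c with hm
  have hq₁f : ∃ᶠ n in Filter.atTop, r n = q₁ := by
    have := hq₁Fr
    rw [hFr, Finset.mem_filter] at this
    exact this.2
  have hfreqm : ∃ᶠ n in Filter.atTop, c (r n) = m :=
    hq₁f.mono fun n hn => by rw [hn, ← hq₁]
  have hev : ∀ᶠ n in Filter.atTop, r n ∈ Fr := by
    have h1 : ∀ q ∈ Finset.univ \ Fr, ∀ᶠ n in Filter.atTop, r n ≠ q := by
      intro q hq
      rw [Finset.mem_sdiff] at hq
      have h2 : ¬ ∃ᶠ n in Filter.atTop, r n = q := by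
        intro hc
        exact hq.2 (by rw [hFr, Finset.mem_filter]; exact ⟨Finset.mem_univ _, hc⟩)
      rwa [Filter.not_frequently] at h2
    have h2 := (Filter.eventually_all_finset (Finset.univ \ Fr)).mpr h1
    filter_upwards [h2] with n hn
    by_contra hc
    exact hn (r n) (Finset.mem_sdiff.mpr ⟨Finset.mem_univ _, hc⟩) rfl
  obtain ⟨N₀, hN₀⟩ := Filter.eventually_atTop.mp hev
  have hdom : ∀ n, N₀ ≤ n → c (r n) ≤ m := fun n hn => Finset.le_sup (hN₀ n hn)
  have hLiff : w ∈ L ↔ Odd m := (hMc w).trans (parity_iff_dominant M c w m N₀ hdom hfreqm)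
  rw [hLiff]
  constructor
  · intro hodd
    have hq₁F : ∀ y : List α, y ≠ [] → δs M q₁ y = q₁ → Odd (mxc M c q₁ y) := by
      intro y hyne hyloop
      by_contra hyodd
      rw [Nat.not_odd_iff_even] at hyodd
      have hle : m ≤ mxc M c q₁ y := by
        rw [hq₁]
        have h3 := self_le_mxc M c q₁ hyne
        rwa [hyloop] at h3
      have hlt : m < mxc M c q₁ y := by
        rcases lt_or_eq_of_le hle with h | h
        · exact h
        · rw [← h] at hyodd
          exact absurd hodd (Nat.not_odd_iff_even.mpr hyodd)
      obtain ⟨n₀, -, hn₀⟩ := Filter.frequently_atTop.mp hq₁f 0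
      obtain ⟨uu, hune, huloop, humxc⟩ := exists_loop M c w q₁ m N₀ hdom hq₁f hfreqm
      apply hP
      refine ⟨seg w 0 n₀, uu, y, hune, hyne, ?_⟩
      have hx : δs M M.init (seg w 0 n₀) = q₁ := by
        have h4 := δs_run M w 0 n₀
        rw [show (0 : ℕ) + n₀ = n₀ by omega] at h4
        rw [show M.run w 0 = M.init from rfl] at h4
        rw [h4]; exact hn₀
      rw [hx]
      exact ⟨huloop, hyloop, by rw [humxc]; exact hodd, hyodd, by rw [humxc]; exact hlt⟩
    exact hq₁f.mono fun n hn => by rw [hn]; exact hq₁F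
  · intro hfreqF
    obtain ⟨q₂, hq₂F, hq₂f⟩ := exists_frequent_of_frequently r _ hfreqF
    obtain ⟨uu, hune, huloop, humxc⟩ := exists_loop M c w q₂ m N₀ hdom hq₂f hfreqm
    have h5 := hq₂F uu hune huloop
    rwa [humxc] at h5

end Stmt5
namespace Stmt5
variable {α : Type}

lemma rhs_not_dbw {L : Set (ℕ → α)} {x u v : List α}
    (hune : u ≠ []) (hvne : v ≠ []) (hA : LangA x u v ⊆ L) (hB : LangB x u v ∩ L = ∅) :
    ¬ DBWRecognizable L := by
  classical
  rintro ⟨N, acc, hacc⟩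
  obtain ⟨d, -⟩ := List.exists_mem_of_ne_nil u hune
  have hup : 1 ≤ u.length := List.length_pos_iff.mpr hune
  have hvp : 1 ≤ v.length := List.length_pos_iff.mpr hvne
  -- y followed by u^ω
  set wA : List α → ℕ → α := fun y => limitW d (fun m => y ++ fr u m) with hwA
  have hpreA : ∀ y m, HasPrefixWord (wA y) (y ++ fr u m) := by
    intro y
    apply limitW_prefix d _ ?_ ?_
    · intro m
      rw [fr_succ', ← List.append_assoc]
      exact List.prefix_append _ _
    · intro m
      simp only [List.length_append, fr_length]
      nlinarith
  set spec : List α → ℕ → Prop := fun y nn => y.length ≤ nn ∧ N.run (wA y) nn ∈ acc with hspec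
  have hsel : ∀ y, (∃ ws : List (List α), (∀ b ∈ ws, b = u ∨ b = v) ∧ y = x ++ ws.flatten) →
      ∃ nn, spec y nn := by
    rintro y ⟨ws, hws, hy⟩
    subst hy
    have hmem : wA (x ++ ws.flatten) ∈ LangA x u v :=
      ⟨ws, hws, fun n => hpreA (x ++ ws.flatten) n⟩
    have hfr := (hacc _).mp (hA hmem)
    obtain ⟨nn, hnn, hnacc⟩ := Filter.frequently_atTop.mp hfr (x ++ ws.flatten).length
    exact ⟨nn, hnn, hnacc⟩
  set sel : List α → ℕ := fun y => if h : ∃ nn, spec y nn then h.choose else 0 with hseldef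
  set Z : ℕ → List α := fun n => Nat.rec x (fun _ z => z ++ fr u (sel z) ++ v) n with hZ
  have hZsucc : ∀ n, Z (n + 1) = Z n ++ fr u (sel (Z n)) ++ v := fun n => rfl
  have hshape : ∀ n, ∃ ws : List (List α), (∀ b ∈ ws, b = u ∨ b = v) ∧ Z n = x ++ ws.flatten := by
    intro n
    induction n with
    | zero => exact ⟨[], by simp, by simp [hZ]⟩
    | succ n ih =>
      obtain ⟨ws, hws, hzn⟩ := ih
      refine ⟨ws ++ (List.replicate (sel (Z n)) u ++ [v]), ?_, ?_⟩
      · intro b hb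
        rcases List.mem_append.mp hb with h | h
        · exact hws b h
        · rcases List.mem_append.mp h with h' | h'
          · exact Or.inl (List.eq_of_mem_replicate h')
          · exact Or.inr (List.mem_singleton.mp h')
      · rw [hZsucc n, hzn]
        simp only [List.flatten_append, List.flatten_cons, List.flatten_nil, List.append_nil,
          List.append_assoc]
        rfl
  have hspecZ : ∀ n, spec (Z n) (sel (Z n)) := by
    intro n
    have h := hsel (Z n) (hshape n)
    have : sel (Z n) = h.choose := by rw [hseldef]; exact dif_pos h
    rw [this]
    exact h.choose_spec
  have hZchain : ∀ n, Z n <+: Z (n + 1) := by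
    intro n
    rw [hZsucc n, List.append_assoc]
    exact List.prefix_append _ _
  have hZlen : ∀ n, n ≤ (Z n).length := by
    intro n
    induction n with
    | zero => omega
    | succ n ih =>
      rw [hZsucc n]
      simp only [List.length_append]
      omega
  set W := limitW d Z with hW
  have hWpre : ∀ n, HasPrefixWord W (Z n) := limitW_prefix d Z hZchain hZlen
  have hWB : W ∈ LangB x u v := by
    refine ⟨fun n => sel (Z n), fun n => ?_⟩
    have hlist : (x ++ ((List.range n).map (fun i => fr u (sel (Z i)) ++ v)).flatten : List α)
        = Z n := by
      induction n with
      | zero => simp [hZ]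
      | succ n ih =>
        rw [List.range_succ]
        simp only [List.map_append, List.map_cons, List.map_nil, List.flatten_append,
          List.flatten_cons, List.flatten_nil, List.append_nil]
        rw [hZsucc n, ← ih]
        simp [List.append_assoc]
    exact hlist ▸ hWpre n
  have hWacc : ∃ᶠ nn in Filter.atTop, N.run W nn ∈ acc := by
    rw [Filter.frequently_atTop]
    intro K
    obtain ⟨hKlen, hKacc⟩ := hspecZ K
    refine ⟨sel (Z K), by have := hZlen K; omega, ?_⟩
    have hlen2 : sel (Z K) ≤ (Z K ++ fr u (sel (Z K))).length := by
      simp only [List.length_append, fr_length]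
      nlinarith
    have hp1 : HasPrefixWord W (Z K ++ fr u (sel (Z K))) :=
      hasPrefixWord_of_prefix (hWpre (K + 1))
        (by rw [hZsucc K]; exact List.prefix_append _ _)
    have hp2 : HasPrefixWord (wA (Z K)) (Z K ++ fr u (sel (Z K))) := hpreA (Z K) (sel (Z K))
    rw [run_eq_of_prefix N hp1 _ hlen2, ← run_eq_of_prefix N hp2 _ hlen2]
    exact hKacc
  have hcontra : W ∈ LangB x u v ∩ L := ⟨hWB, (hacc W).mpr hWacc⟩
  rw [hB] at hcontra
  exact hcontra

end Stmt5

/-- An ω-regular language `L` is not DBW-recognizable iff there are finite words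
`x ∈ Σ*` and `x₁, x₂ ∈ Σ⁺` with `x·(x₁+x₂)*·x₁^ω ⊆ L` and `x·(x₁*·x₂)^ω ∩ L = ∅`. -/
theorem stmt_5 {Sig : Type} [Fintype Sig] (L : Set (ℕ → Sig)) (hL : OmegaRegular L) :
    ¬ DBWRecognizable L ↔
      ∃ x x₁ x₂ : List Sig, x₁ ≠ [] ∧ x₂ ≠ [] ∧
        LangA x x₁ x₂ ⊆ L ∧ LangB x x₁ x₂ ∩ L = ∅ := by
  obtain ⟨M, c, hMc⟩ := hL
  constructor
  · intro hndbw
    have hP : Stmt5.Pat M c := by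
      by_contra hP
      exact hndbw (Stmt5.no_pat_dbw M c hMc hP)
    exact Stmt5.pat_implies_rhs M c hMc hP
  · rintro ⟨x, x₁, x₂, h1, h2, hA, hB⟩
    exact Stmt5.rhs_not_dbw h1 h2 hA hB
end

section
/- Let A be a deterministic parity automaton over Σ with n states such that L(A) is not DBW-recognizable. Then there exists a certificate (x, x₁, x₂) for non-DBW-recognizability of L(A) with |x| + |x₁| + |x₂| ≤ 4·n; in particular, the length of a shortest certificate is linear in the size of a DPW for the language. -/
namespace CertAux
variable {Sig : Type}

def nav (M : DetAuto Sig) (q : M.Q) (w : List Sig) : M.Q := w.foldl M.δ q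

@[simp] lemma nav_nil (M : DetAuto Sig) (q : M.Q) : nav M q [] = q := rfl

lemma nav_cons (M : DetAuto Sig) (q : M.Q) (a : Sig) (w : List Sig) :
    nav M q (a :: w) = nav M (M.δ q a) w := rfl

@[simp] lemma nav_append (M : DetAuto Sig) (q : M.Q) (w₁ w₂ : List Sig) :
    nav M q (w₁ ++ w₂) = nav M (nav M q w₁) w₂ := List.foldl_append

def wtake (x : ℕ → Sig) (n : ℕ) : List Sig := (List.range n).map x

lemma wtake_succ (x : ℕ → Sig) (n : ℕ) : wtake x (n + 1) = wtake x n ++ [x n] := by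
  simp [wtake, List.range_succ]

lemma run_eq_nav (M : DetAuto Sig) (x : ℕ → Sig) (t : ℕ) :
    M.run x t = nav M M.init (wtake x t) := by
  induction t with
  | zero => rfl
  | succ t ih => rw [DetAuto.run, ih, wtake_succ, nav_append]; rfl

lemma run_prefix (M : DetAuto Sig) {w : ℕ → Sig} {P : List Sig}
    (h : HasPrefixWord w P) {t : ℕ} (ht : t ≤ P.length) :
    M.run w t = nav M M.init (P.take t) := by
  induction t with
  | zero => simp [DetAuto.run]
  | succ t ih =>
    have ht' : t < P.length := ht
    have hseq : P.take (t + 1) = P.take t ++ [P.get ⟨t, ht'⟩] := by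
      rw [← List.take_concat_get ht']; simp [List.concat_eq_append]
    rw [DetAuto.run, ih (le_of_lt ht'), h ⟨t, ht'⟩, hseq, nav_append]
    rfl

def listMax (l : List ℕ) : ℕ := l.foldr max 0

lemma le_listMax {l : List ℕ} {a : ℕ} (h : a ∈ l) : a ≤ listMax l := by
  induction l with
  | nil => cases h
  | cons b t ih =>
    rcases List.mem_cons.1 h with rfl | h
    · exact le_max_left _ _
    · exact le_trans (ih h) (le_max_right _ _)

lemma listMax_mem {l : List ℕ} (h : l ≠ []) : listMax l ∈ l := by
  induction l with
  | nil => exact absurd rfl h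
  | cons b t ih =>
    rcases eq_or_ne t [] with rfl | ht
    · simp [listMax]
    · rcases max_cases b (listMax t) with ⟨h1, _⟩ | ⟨h1, _⟩
      · have : listMax (b :: t) = b := h1
        rw [this]; exact List.mem_cons_self
      · have : listMax (b :: t) = listMax t := h1
        rw [this]; exact List.mem_cons_of_mem _ (ih ht)

def loopMax (M : DetAuto Sig) (c : M.Q → ℕ) (q : M.Q) (w : List Sig) : ℕ :=
  listMax ((List.range w.length).map fun i => c (nav M q (w.take i)))

lemma le_loopMax (M : DetAuto Sig) (c : M.Q → ℕ) (q : M.Q) {w : List Sig} {i : ℕ}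
    (h : i < w.length) : c (nav M q (w.take i)) ≤ loopMax M c q w :=
  le_listMax (List.mem_map_of_mem (List.mem_range.2 h))

lemma loopMax_eq (M : DetAuto Sig) (c : M.Q → ℕ) (q : M.Q) {w : List Sig} (h : w ≠ []) :
    ∃ i < w.length, c (nav M q (w.take i)) = loopMax M c q w := by
  have hne : ((List.range w.length).map fun i => c (nav M q (w.take i))) ≠ [] := by
    have := List.length_pos_iff.2 h
    simp only [ne_eq, List.map_eq_nil_iff, List.range_eq_nil]
    omega
  obtain ⟨i, hi, hv⟩ := List.mem_map.1 (listMax_mem hne)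
  exact ⟨i, List.mem_range.1 hi, hv⟩

lemma le_loopMax_all (M : DetAuto Sig) (c : M.Q → ℕ) {q : M.Q} {w : List Sig}
    (hne : w ≠ []) (hloop : nav M q w = q) (i : ℕ) :
    c (nav M q (w.take i)) ≤ loopMax M c q w := by
  rcases lt_or_ge i w.length with h | h
  · exact le_loopMax M c q h
  · rw [List.take_of_length_le h, hloop]
    have := le_loopMax M c q (w := w) (i := 0) (List.length_pos_iff.2 hne)
    simpa using this

end CertAux

namespace CertAux
variable {Sig : Type}

lemma flatlen (u : List Sig) (m : ℕ) :
    (List.replicate m u).flatten.length = m * u.length := by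
  induction m with
  | zero => simp
  | succ m ih => simp [List.replicate_succ, ih]; ring

lemma navFlat (M : DetAuto Sig) {q : M.Q} {u : List Sig} (hu : nav M q u = q) (m : ℕ) :
    nav M q (List.replicate m u).flatten = q := by
  induction m with
  | zero => simp
  | succ m ih => simp [List.replicate_succ, hu, ih]

lemma navRep (M : DetAuto Sig) {q : M.Q} {u : List Sig} (hune : u ≠ [])
    (hu : nav M q u = q) :
    ∀ m s, s ≤ m * u.length →
      nav M q ((List.replicate m u).flatten.take s) = nav M q (u.take (s % u.length)) := by
  intro m
  induction m with
  | zero => intro s hs; simp at hs; simp [hs]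
  | succ m ih =>
    intro s hs
    rw [List.replicate_succ, List.flatten_cons]
    rcases lt_or_ge s u.length with h | h
    · rw [List.take_append_of_le_length (le_of_lt h), Nat.mod_eq_of_lt h]
    · rw [List.take_append, List.take_of_length_le h, nav_append, hu]
      have hs' : s - u.length ≤ m * u.length := by
        have : (m + 1) * u.length = m * u.length + u.length := by ring
        omega
      rw [ih _ hs', Nat.mod_eq_sub_mod h]

lemma navBlocks (M : DetAuto Sig) {q : M.Q} {u v : List Sig}
    (hu : nav M q u = q) (hv : nav M q v = q) :
    ∀ ws : List (List Sig), (∀ b ∈ ws, b = u ∨ b = v) → nav M q ws.flatten = q := by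
  intro ws hws
  induction ws with
  | nil => simp
  | cons b t ih =>
    simp only [List.flatten_cons, nav_append]
    rcases hws b (List.mem_cons_self) with rfl | rfl
    · rw [hu]; exact ih fun z hz => hws z (List.mem_cons_of_mem _ hz)
    · rw [hv]; exact ih fun z hz => hws z (List.mem_cons_of_mem _ hz)

lemma accept_langA (M : DetAuto Sig) (c : M.Q → ℕ) (L : Set (ℕ → Sig))
    (hL : ∀ x, x ∈ L ↔ ParityAccept M c x)
    (x u v : List Sig) (hune : u ≠ []) (q : M.Q) (hx : nav M M.init x = q)
    (hu : nav M q u = q) (hv : nav M q v = q)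
    (hk : Odd (c q)) (hub : ∀ i, c (nav M q (u.take i)) ≤ c q) :
    LangA x u v ⊆ L := by
  rintro w ⟨ws, hws, hpre⟩
  have hulen : 0 < u.length := List.length_pos_iff.2 hune
  set y := x ++ ws.flatten with hy
  have hqy : nav M M.init y = q := by
    rw [hy, nav_append, hx, navBlocks M hu hv ws hws]
  have key : ∀ s m, s ≤ m * u.length →
      M.run w (y.length + s) = nav M q (u.take (s % u.length)) := by
    intro s m hsm
    have hlen : y.length + s ≤ (y ++ (List.replicate m u).flatten).length := by
      simp [flatlen]; omega
    have := run_prefix M (hpre m) hlen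
    rwa [List.take_length_add_append, nav_append, hqy, navRep M hune hu m s hsm] at this
  rw [hL]
  refine ⟨c q, hk, ?_, ?_⟩
  · rw [Filter.frequently_atTop]
    intro N
    refine ⟨y.length + N * u.length, ?_, ?_⟩
    · have : N ≤ N * u.length := Nat.le_mul_of_pos_right _ hulen
      omega
    · rw [key (N * u.length) N le_rfl, Nat.mul_mod_left]
      simp
  · intro m' hm'
    obtain ⟨t, ht, hct⟩ := Filter.frequently_atTop.1 hm' y.length
    obtain ⟨s, rfl⟩ := Nat.exists_eq_add_of_le ht
    have hs : s ≤ s * u.length := Nat.le_mul_of_pos_right _ hulen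
    rw [key s s hs] at hct
    rw [← hct]; exact hub _

lemma reject_langB (M : DetAuto Sig) (c : M.Q → ℕ) (L : Set (ℕ → Sig))
    (hL : ∀ x, x ∈ L ↔ ParityAccept M c x)
    (x u v : List Sig) (hune : u ≠ []) (hvne : v ≠ []) (q : M.Q) (hx : nav M M.init x = q)
    (hu : nav M q u = q) (hv : nav M q v = q) (l : ℕ) (hEven : Even l)
    (hubu : ∀ i, c (nav M q (u.take i)) ≤ l) (hubv : ∀ i, c (nav M q (v.take i)) ≤ l)
    (hatt : ∃ i < v.length, c (nav M q (v.take i)) = l) :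
    LangB x u v ∩ L = ∅ := by
  have hulen : 0 < u.length := List.length_pos_iff.2 hune
  have hvlen : 0 < v.length := List.length_pos_iff.2 hvne
  rw [Set.eq_empty_iff_forall_notMem]
  rintro w ⟨⟨j, hpre⟩, hwL⟩
  set B : ℕ → List Sig := fun i => (List.replicate (j i) u).flatten ++ v with hB
  set P : ℕ → List Sig := fun m =>
    x ++ ((List.range m).map B).flatten with hP
  have hPsucc : ∀ m, P (m + 1) = P m ++ B m := by
    intro m; simp [hP, List.range_succ]
  have hBq : ∀ i, nav M q (B i) = q := by
    intro i; rw [hB]; simp only [nav_append, navFlat M hu, hv]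
  have hBlen : ∀ i, (B i).length = j i * u.length + v.length := by
    intro i; simp [hB, flatlen]
  have hnavP : ∀ m, nav M M.init (P m) = q := by
    intro m
    induction m with
    | zero => simpa [hP] using hx
    | succ m ih => rw [hPsucc, nav_append, ih, hBq]
  have hPlen : ∀ m, x.length + m ≤ (P m).length := by
    intro m
    induction m with
    | zero => simp [hP]
    | succ m ih =>
      rw [hPsucc, List.length_append, hBlen]
      omega
  -- colors within a block
  have hblock : ∀ i s, c (nav M q ((B i).take s)) ≤ l := by
    intro i s
    rw [hB, List.take_append]
    rcases le_or_gt s ((List.replicate (j i) u).flatten).length with h | h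
    · have h0 : s - ((List.replicate (j i) u).flatten).length = 0 := by omega
      rw [h0]
      simp only [List.take_zero, List.append_nil]
      rw [navRep M hune hu (j i) s (by rwa [flatlen] at h)]
      exact hubu _
    · rw [List.take_of_length_le (le_of_lt h), nav_append, navFlat M hu]
      exact hubv _
  -- all colors ≤ l after x
  have hbound : ∀ t, x.length ≤ t → c (M.run w t) ≤ l := by
    intro t hxt
    have htP : t ≤ (P t).length := le_trans (by omega) (hPlen t)
    rw [run_prefix M (hpre t) htP]
    clear htP
    -- prove by induction on m the general claim
    have main : ∀ m t', x.length ≤ t' → t' ≤ (P m).length →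
        c (nav M M.init ((P m).take t')) ≤ l := by
      intro m
      induction m with
      | zero =>
        intro t' h1 h2
        have hP0 : (P 0).length = x.length := by simp [hP]
        have : t' = x.length := by omega
        subst this
        rw [show (P 0).take x.length = x by simp [hP]]
        rw [hx]
        have := hubv 0
        simpa using this
      | succ m ih =>
        intro t' h1 h2
        rcases le_or_gt t' ((P m).length) with h | h
        · rw [hPsucc, List.take_append_of_le_length h]
          exact ih t' h1 h
        · rw [hPsucc, List.take_append, List.take_of_length_le (le_of_lt h),
            nav_append, hnavP]
          exact hblock _ _
    exact main t t hxt (le_trans (by omega) (hPlen t))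
  -- color l occurs frequently
  obtain ⟨i₁, hi₁, hatt₁⟩ := hatt
  have hfreq : ∃ᶠ t in Filter.atTop, c (M.run w t) = l := by
    rw [Filter.frequently_atTop]
    intro N
    refine ⟨(P N).length + (j N * u.length + i₁), ?_, ?_⟩
    · have := hPlen N; omega
    · have hlenB : (P (N + 1)).length = (P N).length + (j N * u.length + v.length) := by
        rw [hPsucc, List.length_append, hBlen]
      have hle : (P N).length + (j N * u.length + i₁) ≤ (P (N + 1)).length := by omega
      have hrun := run_prefix M (hpre (N + 1)) (P := P (N + 1)) hle
      rw [hPsucc] at hrun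
      rw [hrun, List.take_append, List.take_of_length_le (by omega),
        nav_append, hnavP]
      have heq : (B N).take ((P N).length + (j N * u.length + i₁) - (P N).length)
          = (B N).take (j N * u.length + i₁) := by congr 1; omega
      rw [heq, hB]
      have hfl : ((List.replicate (j N) u).flatten).length = j N * u.length := flatlen u _
      rw [show j N * u.length + i₁ = ((List.replicate (j N) u).flatten).length + i₁ by rw [hfl],
        List.take_length_add_append, nav_append, navFlat M hu]
      exact hatt₁
  -- contradiction with parity acceptance
  obtain ⟨m, hodd, hf, hmax⟩ := (hL w).1 hwL
  have h1 : l ≤ m := hmax l hfreq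
  have h2 : m ≤ l := by
    obtain ⟨t, ht, hct⟩ := Filter.frequently_atTop.1 hf x.length
    rw [← hct]; exact hbound t ht
  have : m = l := le_antisymm h2 h1
  rw [this] at hodd
  exact (Nat.not_odd_iff_even.2 hEven) hodd

end CertAux

namespace CertAux
variable {Sig : Type}

lemma shorten (M : DetAuto Sig) (p : M.Q) :
    ∀ (N : ℕ) (w : List Sig), w.length ≤ N →
      ∃ w', nav M p w' = nav M p w ∧ w'.length < Fintype.card M.Q ∧
        ∀ i, ∃ i', nav M p (w'.take i) = nav M p (w.take i') := by
  have hcard : 0 < Fintype.card M.Q := Fintype.card_pos_iff.2 ⟨M.init⟩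
  intro N
  induction N with
  | zero =>
    intro w hw
    have : w = [] := List.eq_nil_of_length_eq_zero (by omega)
    subst this
    exact ⟨[], rfl, by simpa using hcard, fun i => ⟨0, by simp⟩⟩
  | succ N ih =>
    intro w hw
    rcases lt_or_ge w.length (Fintype.card M.Q) with h | h
    · exact ⟨w, rfl, h, fun i => ⟨i, rfl⟩⟩
    · obtain ⟨a, b, hab, hg⟩ := Fintype.exists_ne_map_eq_of_card_lt
        (fun i : Fin (Fintype.card M.Q + 1) => nav M p (w.take i.1)) (by simp)
      -- wlog a < b
      obtain ⟨a', b', hor, hgab⟩ : ∃ a' b' : ℕ, (a' < b' ∧ b' ≤ w.length) ∧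
          nav M p (w.take a') = nav M p (w.take b') := by
        rcases lt_or_gt_of_ne hab with hlt | hlt
        · exact ⟨a.1, b.1, ⟨hlt, le_trans (Nat.lt_succ_iff.1 b.2) h⟩, hg⟩
        · exact ⟨b.1, a.1, ⟨hlt, le_trans (Nat.lt_succ_iff.1 a.2) h⟩, hg.symm⟩
      obtain ⟨hab', hble⟩ := hor
      have hta : (w.take a').length = a' := by
        rw [List.length_take]; omega
      have hlen2 : (w.take a' ++ w.drop b').length ≤ N := by
        rw [List.length_append, hta, List.length_drop]; omega
      have hnav2 : nav M p (w.take a' ++ w.drop b') = nav M p w := by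
        rw [nav_append, hgab, ← nav_append, List.take_append_drop]
      have hidx : ∀ i, ∃ i', nav M p ((w.take a' ++ w.drop b').take i) = nav M p (w.take i') := by
        intro i
        rcases le_or_gt i a' with hia | hia
        · refine ⟨i, ?_⟩
          rw [List.take_append, List.take_take,
            show i - (w.take a').length = 0 by omega]
          simp [min_eq_left hia]
        · refine ⟨b' + (i - a'), ?_⟩
          rw [List.take_append, hta,
            List.take_of_length_le (by rw [hta]; omega)]
          rw [nav_append, hgab, ← nav_append, ← List.take_add]
      obtain ⟨w', h1, h2, h3⟩ := ih _ hlen2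
      refine ⟨w', h1.trans hnav2, h2, fun i => ?_⟩
      obtain ⟨i', e⟩ := h3 i
      obtain ⟨i'', e'⟩ := hidx i'
      exact ⟨i'', e.trans e'⟩

lemma loop_shorten (M : DetAuto Sig) {q : M.Q} {u : List Sig} (hne : u ≠ [])
    (hloop : nav M q u = q) :
    ∃ u', u' ≠ [] ∧ nav M q u' = q ∧ u'.length ≤ Fintype.card M.Q ∧
      ∀ i, ∃ i', nav M q (u'.take i) = nav M q (u.take i') := by
  obtain ⟨a, w, rfl⟩ := List.exists_cons_of_ne_nil hne
  obtain ⟨w', h1, h2, h3⟩ := shorten M (M.δ q a) w.length w le_rfl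
  refine ⟨a :: w', List.cons_ne_nil _ _, ?_, by simp; omega, ?_⟩
  · rw [nav_cons, h1, ← nav_cons]; exact hloop
  · intro i
    cases i with
    | zero => exact ⟨0, rfl⟩
    | succ i =>
      obtain ⟨i', e⟩ := h3 i
      refine ⟨i' + 1, ?_⟩
      rw [List.take_succ_cons, List.take_succ_cons, nav_cons, nav_cons, e]

lemma cert_of_pattern (M : DetAuto Sig) (c : M.Q → ℕ) (L : Set (ℕ → Sig))
    (hL : ∀ x, x ∈ L ↔ ParityAccept M c x)
    (q : M.Q) (x0 u v : List Sig) (hx0 : nav M M.init x0 = q)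
    (hune : u ≠ []) (hvne : v ≠ [])
    (hu : nav M q u = q) (hv : nav M q v = q)
    (hOdd : Odd (loopMax M c q u)) (hEvenv : Even (loopMax M c q v))
    (hlt : loopMax M c q u < loopMax M c q v) :
    ∃ x x₁ x₂ : List Sig, x₁ ≠ [] ∧ x₂ ≠ [] ∧
      LangA x x₁ x₂ ⊆ L ∧ LangB x x₁ x₂ ∩ L = ∅ ∧
      x.length + x₁.length + x₂.length ≤ 4 * Fintype.card M.Q := by
  set k := loopMax M c q u with hk
  set l := loopMax M c q v with hl
  -- rebase at a state of color k on the u-cycle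
  obtain ⟨i₀, hi₀, hci₀⟩ := loopMax_eq M c q hune
  set q' := nav M q (u.take i₀) with hq'
  have hcq' : c q' = k := hci₀
  have hdropq : nav M q' (u.drop i₀) = q := by
    have h := nav_append M q (u.take i₀) (u.drop i₀)
    rw [List.take_append_drop, hu] at h
    exact h.symm
  -- rebased u-loop
  have hu₁loop : nav M q' (u.drop i₀ ++ u.take i₀) = q' := by
    rw [nav_append, hdropq]
  have hu₁ne : u.drop i₀ ++ u.take i₀ ≠ [] := by
    have := List.length_pos_iff.2 hune
    simp only [ne_eq, List.append_eq_nil_iff, not_and]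
    intro hd
    have h1 : u.length - i₀ = 0 := by
      rw [← List.length_drop, hd, List.length_nil]
    intro h2
    have h3 : min i₀ u.length = 0 := by
      rw [← List.length_take, h2, List.length_nil]
    omega
  have hu₁ub : ∀ i, c (nav M q' ((u.drop i₀ ++ u.take i₀).take i)) ≤ k := by
    intro i
    rw [List.take_append]
    rcases le_or_gt i (u.drop i₀).length with h | h
    · rw [show i - (u.drop i₀).length = 0 by omega]
      simp only [List.take_zero, List.append_nil]
      have he : nav M q' ((u.drop i₀).take i) = nav M q (u.take (i₀ + i)) := by
        rw [List.take_add, nav_append]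
      rw [he]
      exact le_loopMax_all M c hune hu _
    · rw [List.take_of_length_le (le_of_lt h), nav_append, hdropq, List.take_take]
      exact le_loopMax_all M c hune hu _
  -- rebased v-loop
  obtain ⟨i₁', hi₁', hci₁'⟩ := loopMax_eq M c q hvne
  set v₁ := u.drop i₀ ++ (v ++ u.take i₀) with hv₁
  have hv₁loop : nav M q' v₁ = q' := by
    rw [hv₁, nav_append, hdropq, nav_append, hv]
  have hv₁ub : ∀ i, c (nav M q' (v₁.take i)) ≤ l := by
    intro i
    rw [hv₁, List.take_append]
    rcases le_or_gt i (u.drop i₀).length with h | h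
    · rw [show i - (u.drop i₀).length = 0 by omega]
      simp only [List.take_zero, List.append_nil]
      have he : nav M q' ((u.drop i₀).take i) = nav M q (u.take (i₀ + i)) := by
        rw [List.take_add, nav_append]
      rw [he]
      exact le_trans (le_loopMax_all M c hune hu _) (le_of_lt hlt)
    · rw [List.take_of_length_le (le_of_lt h), nav_append, hdropq,
        List.take_append]
      rcases le_or_gt (i - (u.drop i₀).length) v.length with h2 | h2
      · rw [show i - (u.drop i₀).length - v.length = 0 by omega]
        simp only [List.take_zero, List.append_nil]
        exact le_loopMax_all M c hvne hv _
      · rw [List.take_of_length_le (le_of_lt h2), nav_append, hv, List.take_take]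
        exact le_trans (le_loopMax_all M c hune hu _) (le_of_lt hlt)
  have hv₁att : ∃ i < v₁.length, c (nav M q' (v₁.take i)) = l := by
    refine ⟨(u.drop i₀).length + i₁', by
      rw [hv₁, List.length_append, List.length_append]; omega, ?_⟩
    rw [hv₁, List.take_length_add_append, List.take_append_of_le_length (le_of_lt hi₁'),
      nav_append, hdropq]
    exact hci₁'
  -- shorten the u-loop
  obtain ⟨u₂, hu₂ne, hu₂loop, hu₂len, hu₂idx⟩ := loop_shorten M hu₁ne hu₁loop
  have hu₂ub : ∀ i, c (nav M q' (u₂.take i)) ≤ c q' := by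
    intro i
    obtain ⟨i', e⟩ := hu₂idx i
    rw [e, hcq']
    exact hu₁ub i'
  -- shorten the v-loop, keeping an l-colored state
  obtain ⟨i₁, hi₁len, hcp'⟩ := hv₁att
  have hp'ne : nav M q' (v₁.take i₁) ≠ q' := by
    intro h
    rw [h, hcq'] at hcp'
    omega
  have hs₂ : nav M (nav M q' (v₁.take i₁)) (v₁.drop i₁) = q' := by
    have h := nav_append M q' (v₁.take i₁) (v₁.drop i₁)
    rw [List.take_append_drop, hv₁loop] at h
    exact h.symm
  obtain ⟨s₁', e₁, len₁, idx₁⟩ := shorten M q' (v₁.take i₁).length (v₁.take i₁) le_rfl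
  obtain ⟨s₂', e₂, len₂, idx₂⟩ :=
    shorten M (nav M q' (v₁.take i₁)) (v₁.drop i₁).length (v₁.drop i₁) le_rfl
  rw [hs₂] at e₂
  have hs₂ne : s₂' ≠ [] := by
    intro h
    rw [h, nav_nil] at e₂
    exact hp'ne e₂
  have hv₂loop : nav M q' (s₁' ++ s₂') = q' := by
    rw [nav_append, e₁, e₂]
  have hv₂ne : s₁' ++ s₂' ≠ [] := by
    simp only [ne_eq, List.append_eq_nil_iff, not_and]
    intro _; exact hs₂ne
  have hv₂ub : ∀ i, c (nav M q' ((s₁' ++ s₂').take i)) ≤ l := by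
    intro i
    rw [List.take_append]
    rcases le_or_gt i s₁'.length with h | h
    · rw [show i - s₁'.length = 0 by omega]
      simp only [List.take_zero, List.append_nil]
      obtain ⟨i', e⟩ := idx₁ i
      rw [e, List.take_take]
      exact hv₁ub _
    · rw [List.take_of_length_le (le_of_lt h), nav_append, e₁]
      obtain ⟨i', e⟩ := idx₂ (i - s₁'.length)
      rw [e]
      have he : nav M (nav M q' (v₁.take i₁)) ((v₁.drop i₁).take i')
          = nav M q' (v₁.take (i₁ + i')) := by
        rw [List.take_add, nav_append]
      rw [he]
      exact hv₁ub _
  have hv₂att : ∃ i < (s₁' ++ s₂').length, c (nav M q' ((s₁' ++ s₂').take i)) = l := by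
    refine ⟨s₁'.length, by
      rw [List.length_append]
      have := List.length_pos_iff.2 hs₂ne
      omega, ?_⟩
    rw [List.take_append_of_le_length le_rfl, List.take_of_length_le le_rfl, e₁]
    exact hcp'
  -- shorten the access path
  obtain ⟨x₂, ex, lenx, _⟩ := shorten M M.init (x0 ++ u.take i₀).length (x0 ++ u.take i₀) le_rfl
  have hx₂ : nav M M.init x₂ = q' := by
    rw [ex, nav_append, hx0]
  -- assemble
  refine ⟨x₂, u₂, s₁' ++ s₂', hu₂ne, hv₂ne, ?_, ?_, ?_⟩
  · exact accept_langA M c L hL x₂ u₂ (s₁' ++ s₂') hu₂ne q' hx₂ hu₂loop hv₂loop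
      (hcq' ▸ hOdd) hu₂ub
  · refine reject_langB M c L hL x₂ u₂ (s₁' ++ s₂') hu₂ne hv₂ne q' hx₂ hu₂loop hv₂loop
      l hEvenv ?_ hv₂ub hv₂att
    intro i
    exact le_trans (hu₂ub i) (by rw [hcq']; exact le_of_lt hlt)
  · rw [List.length_append]
    omega

end CertAux

namespace CertAux
variable {Sig : Type}

def wseg (x : ℕ → Sig) (t₀ s : ℕ) : List Sig := (List.range s).map fun i => x (t₀ + i)

lemma wseg_run (M : DetAuto Sig) (x : ℕ → Sig) (t₀ : ℕ) :
    ∀ s, M.run x (t₀ + s) = nav M (M.run x t₀) (wseg x t₀ s) := by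
  intro s
  induction s with
  | zero => simp [wseg]
  | succ s ih =>
    rw [show t₀ + (s + 1) = (t₀ + s) + 1 from rfl, DetAuto.run, ih]
    simp [wseg, List.range_succ, nav_append, nav_cons]

lemma wseg_take (x : ℕ → Sig) (t₀ s i : ℕ) :
    (wseg x t₀ s).take i = wseg x t₀ (min i s) := by
  rw [wseg, ← List.map_take, List.take_range]; rfl

lemma wseg_run_take (M : DetAuto Sig) (x : ℕ → Sig) (t₀ s i : ℕ) (h : i ≤ s) :
    nav M (M.run x t₀) ((wseg x t₀ s).take i) = M.run x (t₀ + i) := by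
  rw [wseg_take, min_eq_left h, ← wseg_run]

lemma wseg_len (x : ℕ → Sig) (t₀ s : ℕ) : (wseg x t₀ s).length = s := by
  simp [wseg]

lemma dbw_of_no_pattern (M : DetAuto Sig) (c : M.Q → ℕ) (L : Set (ℕ → Sig))
    (hL : ∀ x, x ∈ L ↔ ParityAccept M c x)
    (hnp : ¬ ∃ (q : M.Q) (u v : List Sig), (∃ w, nav M M.init w = q) ∧ u ≠ [] ∧ v ≠ [] ∧
      nav M q u = q ∧ nav M q v = q ∧ Odd (loopMax M c q u) ∧ Even (loopMax M c q v) ∧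
      loopMax M c q u < loopMax M c q v) :
    DBWRecognizable L := by
  classical
  refine ⟨M, {p | ∀ w, w ≠ [] → nav M p w = p → Odd (loopMax M c p w)}, fun x => ?_⟩
  rw [hL]
  set r := M.run x with hr
  set I : Finset M.Q := Finset.univ.filter (fun p => ∃ᶠ t in Filter.atTop, r t = p) with hI
  have hIne : I.Nonempty := by
    obtain ⟨p, hp⟩ := Finite.exists_infinite_fiber r
    refine ⟨p, Finset.mem_filter.2 ⟨Finset.mem_univ _, ?_⟩⟩
    rw [Nat.frequently_atTop_iff_infinite]
    exact Set.infinite_coe_iff.1 hp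
  obtain ⟨T, hT⟩ : ∃ T, ∀ t, T ≤ t → r t ∈ I := by
    have hev : ∀ᶠ t in Filter.atTop, ∀ p : M.Q, ¬(∃ᶠ s in Filter.atTop, r s = p) → r t ≠ p := by
      rw [Filter.eventually_all]
      intro p
      by_cases hp : ∃ᶠ s in Filter.atTop, r s = p
      · exact Filter.Eventually.of_forall fun t h => absurd hp h
      · exact (Filter.not_frequently.1 hp).mono fun t ht _ => ht
    obtain ⟨T, hT⟩ := Filter.eventually_atTop.1 hev
    refine ⟨T, fun t ht => ?_⟩
    rw [hI, Finset.mem_filter]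
    refine ⟨Finset.mem_univ _, ?_⟩
    by_contra hcon
    exact hT t ht (r t) hcon rfl
  obtain ⟨ql, hqlI, hql⟩ := Finset.exists_mem_eq_sup I hIne c
  set l := I.sup c with hldef
  have hqlfreq : ∃ᶠ t in Filter.atTop, r t = ql := (Finset.mem_filter.1 hqlI).2
  have hub : ∀ t, T ≤ t → c (r t) ≤ l := fun t ht => Finset.le_sup (hT t ht)
  have hfreql : ∃ᶠ t in Filter.atTop, c (r t) = l := by
    apply hqlfreq.mono
    intro t ht
    rw [ht, ← hql]
  constructor
  · -- parity → Büchi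
    rintro ⟨m, hodd, hf, hmax⟩
    have h1 : l ≤ m := hmax l hfreql
    have h2 : m ≤ l := by
      obtain ⟨t, ht, hct⟩ := Filter.frequently_atTop.1 hf T
      rw [← hct]; exact hub t ht
    have hml : m = l := le_antisymm h2 h1
    rw [hml] at hodd
    have hqlacc : ∀ w, w ≠ [] → nav M ql w = ql → Odd (loopMax M c ql w) := by
      intro w hwne hwloop
      by_contra hno
      have hEvenw : Even (loopMax M c ql w) := Nat.not_odd_iff_even.1 hno
      have hlw : l ≤ loopMax M c ql w := by
        have h0 := le_loopMax M c ql (w := w) (i := 0) (List.length_pos_iff.2 hwne)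
        rw [List.take_zero, nav_nil] at h0
        rw [hql]
        exact h0
      have hlt : l < loopMax M c ql w := by
        rcases lt_or_eq_of_le hlw with h | h
        · exact h
        · rw [← h] at hEvenw
          exact absurd hodd (Nat.not_odd_iff_even.2 hEvenw)
      -- a loop at ql with max = l
      obtain ⟨t₀, ht₀T, ht₀⟩ := Filter.frequently_atTop.1 hqlfreq T
      obtain ⟨t₁, ht₁, ht₁q⟩ := Filter.frequently_atTop.1 hqlfreq (t₀ + 1)
      set u := wseg x t₀ (t₁ - t₀) with hu
      have hune : u ≠ [] := by
        rw [hu, ← List.length_pos_iff, wseg_len]; omega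
      have hrun : ∀ i, i ≤ t₁ - t₀ → nav M ql (u.take i) = r (t₀ + i) := by
        intro i hi
        rw [hu, ← ht₀]
        exact wseg_run_take M x t₀ (t₁ - t₀) i hi
      have huloop : nav M ql u = ql := by
        have := hrun (t₁ - t₀) le_rfl
        rw [List.take_of_length_le (by rw [hu, wseg_len])] at this
        rw [this, show t₀ + (t₁ - t₀) = t₁ by omega]
        exact ht₁q
      have humax : loopMax M c ql u = l := by
        apply le_antisymm
        · obtain ⟨i, hilen, hival⟩ := loopMax_eq M c ql hune
          rw [← hival, hrun i (by rw [hu, wseg_len] at hilen; omega)]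
          exact hub _ (by omega)
        · have h0 := le_loopMax M c ql (w := u) (i := 0) (List.length_pos_iff.2 hune)
          rw [List.take_zero, nav_nil] at h0
          rw [hql]
          exact h0
      exact hnp ⟨ql, u, w, ⟨wtake x t₀, by rw [← run_eq_nav, ← hr, ht₀]⟩, hune, hwne,
        huloop, hwloop, by rw [humax]; exact hodd, hEvenw, by rw [humax]; exact hlt⟩
    apply hqlfreq.mono
    intro t ht
    rw [ht]
    exact hqlacc
  · -- Büchi → parity
    intro hacc
    obtain ⟨t₀, ht₀T, ht₀⟩ := Filter.frequently_atTop.1 hacc T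
    set p := r t₀ with hp
    have hpI : p ∈ I := hT t₀ ht₀T
    have hpfreq : ∃ᶠ t in Filter.atTop, r t = p := (Finset.mem_filter.1 hpI).2
    obtain ⟨ts, hts, htsq⟩ := Filter.frequently_atTop.1 hqlfreq (t₀ + 1)
    obtain ⟨t₁, ht₁, ht₁p⟩ := Filter.frequently_atTop.1 hpfreq (ts + 1)
    set u := wseg x t₀ (t₁ - t₀) with hu
    have hune : u ≠ [] := by
      rw [hu, ← List.length_pos_iff, wseg_len]; omega
    have hrun : ∀ i, i ≤ t₁ - t₀ → nav M p (u.take i) = r (t₀ + i) := by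
      intro i hi
      rw [hu, hp]
      exact wseg_run_take M x t₀ (t₁ - t₀) i hi
    have huloop : nav M p u = p := by
      have := hrun (t₁ - t₀) le_rfl
      rw [List.take_of_length_le (by rw [hu, wseg_len])] at this
      rw [this, show t₀ + (t₁ - t₀) = t₁ by omega]
      exact ht₁p
    have humax : loopMax M c p u = l := by
      apply le_antisymm
      · obtain ⟨i, hilen, hival⟩ := loopMax_eq M c p hune
        rw [← hival, hrun i (by rw [hu, wseg_len] at hilen; omega)]
        exact hub _ (by omega)
      · have hidx : ts - t₀ < u.length := by rw [hu, wseg_len]; omega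
        have := le_loopMax M c p hidx
        rw [hrun (ts - t₀) (by omega), show t₀ + (ts - t₀) = ts by omega, htsq] at this
        rw [hql]
        exact this
    have hOddl : Odd l := by
      rw [← humax]
      exact ht₀ u hune huloop
    refine ⟨l, hOddl, hfreql, ?_⟩
    intro m' hm'
    obtain ⟨t, ht, hct⟩ := Filter.frequently_atTop.1 hm' T
    rw [← hct]
    exact hub t ht

end CertAux

/-- If a DPW with `n` states recognizes a language `L` that is not DBW-recognizable, then
there is a certificate for the non-DBW-recognizability of `L` of length at most `4n`. -/
theorem stmt_8 {Sig : Type} [Fintype Sig] (M : DetAuto Sig) (c : M.Q → ℕ) (n : ℕ)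
    (hn : Fintype.card M.Q = n) (L : Set (ℕ → Sig))
    (hL : ∀ x, x ∈ L ↔ ParityAccept M c x)
    (hnd : ¬ DBWRecognizable L) :
    ∃ x x₁ x₂ : List Sig, x₁ ≠ [] ∧ x₂ ≠ [] ∧
      LangA x x₁ x₂ ⊆ L ∧ LangB x x₁ x₂ ∩ L = ∅ ∧
      x.length + x₁.length + x₂.length ≤ 4 * n := by
  classical
  by_cases hpat : ∃ (q : M.Q) (u v : List Sig), (∃ w, CertAux.nav M M.init w = q) ∧
      u ≠ [] ∧ v ≠ [] ∧ CertAux.nav M q u = q ∧ CertAux.nav M q v = q ∧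
      Odd (CertAux.loopMax M c q u) ∧ Even (CertAux.loopMax M c q v) ∧
      CertAux.loopMax M c q u < CertAux.loopMax M c q v
  · obtain ⟨q, u, v, ⟨x0, hx0⟩, hune, hvne, hu, hv, hOdd, hEven, hlt⟩ := hpat
    have h := CertAux.cert_of_pattern M c L hL q x0 u v hx0 hune hvne hu hv hOdd hEven hlt
    rw [hn] at h
    exact h
  · exact absurd (CertAux.dbw_of_no_pattern M c L hL hpat) hnd
end
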